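/- arXiv:1212.5566 — 6 statements merged into one kernel-verified Lean document; each statement's English description precedes it below -/
import Mathlib

section
/- Entropy identity for the regularized Euler system: Suppose (ρ, m, E) is a smooth solution of ∂_t ρ + div m − div f = 0, ∂_t m + div(u ⊗ m) + ∇p − div 𝕘 = 0, ∂_t E + div(u(E+p)) − div(h + 𝕘·u) = 0, with ρ > 0, u := m/ρ, e := E/ρ − ½|u|². If one writes 𝕘 = 𝔾 + f ⊗ u and h = l − ½|u|² f for smooth fields 𝔾 (a d×d tensor field), f and l (vector fields), then the specific entropy s = s(ρ,e) satisfies the pointwise identity ρ(∂_t s + u·∇s) + div((e s_e − ρ s_ρ) f − s_e l) − f·∇(e s_e − ρ s_ρ) + l·∇s_e − s_e (𝔾 : ∇u) = 0. -/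
noncomputable section

open Real

/-- Partial derivative with respect to the first variable (`ρ`). -/
def D1 (f : ℝ × ℝ → ℝ) (x : ℝ × ℝ) : ℝ := fderiv ℝ f x (1, 0)

/-- Partial derivative with respect to the second variable (`e`). -/
def D2 (f : ℝ × ℝ → ℝ) (x : ℝ × ℝ) : ℝ := fderiv ℝ f x (0, 1)

/-- The state domain `(0,∞)²`. -/
def dom : Set (ℝ × ℝ) := {x : ℝ × ℝ | 0 < x.1 ∧ 0 < x.2}

/-- `s_ρ` -/
def sRho (s : ℝ × ℝ → ℝ) : ℝ × ℝ → ℝ := D1 s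

/-- `s_e` -/
def sE (s : ℝ × ℝ → ℝ) : ℝ × ℝ → ℝ := D2 s

/-- `s_{ρe}` -/
def sRhoE (s : ℝ × ℝ → ℝ) : ℝ × ℝ → ℝ := D1 (D2 s)

/-- `s_{ee}` -/
def sEE (s : ℝ × ℝ → ℝ) : ℝ × ℝ → ℝ := D2 (D2 s)

/-- The pressure `p := -ρ² s_ρ / s_e`. -/
def press (s : ℝ × ℝ → ℝ) (x : ℝ × ℝ) : ℝ := -x.1 ^ 2 * sRho s x / sE s x

/-- The temperature `T := 1 / s_e`. -/
def temp (s : ℝ × ℝ → ℝ) (x : ℝ × ℝ) : ℝ := (sE s x)⁻¹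

/-- `∂_ρ(ρ² s_ρ)` -/
def dRho2sRho (s : ℝ × ℝ → ℝ) (x : ℝ × ℝ) : ℝ :=
  deriv (fun r : ℝ => r ^ 2 * sRho s (r, x.2)) x.1

/-- `det Σ := ∂_ρ(ρ² s_ρ)·s_{ee} - ρ² s_{ρe}²`. -/
def detSigma (s : ℝ × ℝ → ℝ) (x : ℝ × ℝ) : ℝ :=
  dRho2sRho s x * sEE s x - x.1 ^ 2 * (sRhoE s x) ^ 2

/-- `p_ρ` -/
def pRho (s : ℝ × ℝ → ℝ) : ℝ × ℝ → ℝ := D1 (press s)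

/-- `p_e` -/
def pE (s : ℝ × ℝ → ℝ) : ℝ × ℝ → ℝ := D2 (press s)

/-- `T_ρ` -/
def tRho (s : ℝ × ℝ → ℝ) : ℝ × ℝ → ℝ := D1 (temp s)

/-- `T_e` -/
def tE (s : ℝ × ℝ → ℝ) : ℝ × ℝ → ℝ := D2 (temp s)

/-- The specific heat at constant pressure
`c_p := s_e⁻¹ (p_ρ s_e - p_e s_ρ) / (p_ρ T_e - p_e T_ρ)`. -/
def cP (s : ℝ × ℝ → ℝ) (x : ℝ × ℝ) : ℝ :=
  (sE s x)⁻¹ * (pRho s x * sE s x - pE s x * sRho s x) /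
    (pRho s x * tE s x - pE s x * tRho s x)

/-- The squared sound speed `c² := p_ρ - (s_ρ/s_e) p_e`. -/
def cSq (s : ℝ × ℝ → ℝ) (x : ℝ × ℝ) : ℝ := pRho s x - sRho s x / sE s x * pE s x

/-- The convexity conditions `∂_ρ(ρ² s_ρ) < 0`, `s_{ee} < 0`, `det Σ > 0` on the domain. -/
def Convexity (s : ℝ × ℝ → ℝ) : Prop :=
  ∀ x ∈ dom, dRho2sRho s x < 0 ∧ sEE s x < 0 ∧ 0 < detSigma s x

/-- Time derivative `∂_t f` of a scalar field on space-time `ℝ × ℝ^n` (time first). -/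
def Dt {n : ℕ} (f : ℝ × (Fin n → ℝ) → ℝ) (q : ℝ × (Fin n → ℝ)) : ℝ :=
  fderiv ℝ f q (1, 0)

/-- Spatial partial derivative `∂_{x_i} f` of a scalar field on space-time `ℝ × ℝ^n`. -/
def Dx {n : ℕ} (i : Fin n) (f : ℝ × (Fin n → ℝ) → ℝ) (q : ℝ × (Fin n → ℝ)) : ℝ :=
  fderiv ℝ f q (0, Pi.single i 1)

section EIHelpers

variable {X : Type*} [NormedAddCommGroup X] [NormedSpace ℝ X]

lemma ei_fdmul {f g : X → ℝ} {x : X} (hf : DifferentiableAt ℝ f x)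
    (hg : DifferentiableAt ℝ g x) (v : X) :
    fderiv ℝ (fun y => f y * g y) x v = f x * fderiv ℝ g x v + g x * fderiv ℝ f x v := by
  rw [fderiv_fun_mul hf hg]; simp [smul_eq_mul]

lemma ei_fdadd {f g : X → ℝ} {x : X} (hf : DifferentiableAt ℝ f x)
    (hg : DifferentiableAt ℝ g x) (v : X) :
    fderiv ℝ (fun y => f y + g y) x v = fderiv ℝ f x v + fderiv ℝ g x v := by
  rw [fderiv_fun_add hf hg]; simp

lemma ei_fdsub {f g : X → ℝ} {x : X} (hf : DifferentiableAt ℝ f x)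
    (hg : DifferentiableAt ℝ g x) (v : X) :
    fderiv ℝ (fun y => f y - g y) x v = fderiv ℝ f x v - fderiv ℝ g x v := by
  rw [fderiv_fun_sub hf hg]; simp

lemma ei_fdsum {k : ℕ} {F : Fin k → X → ℝ} {x : X}
    (h : ∀ i, DifferentiableAt ℝ (F i) x) (v : X) :
    fderiv ℝ (fun y => ∑ i, F i y) x v = ∑ i, fderiv ℝ (F i) x v := by
  rw [fderiv_fun_sum fun i _ => h i]; simp

lemma ei_fdcmul {f : X → ℝ} {x : X} (hf : DifferentiableAt ℝ f x) (c : ℝ) (v : X) :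
    fderiv ℝ (fun y => c * f y) x v = c * fderiv ℝ f x v := by
  rw [fderiv_const_mul hf c]; simp

lemma ei_fddiv {f g : X → ℝ} {x : X} (hf : DifferentiableAt ℝ f x)
    (hg : DifferentiableAt ℝ g x) (h : g x ≠ 0) :
    DifferentiableAt ℝ (fun y => f y / g y) x := by
  simp only [div_eq_mul_inv]; exact hf.mul (hg.inv h)

lemma ei_isOpen_dom : IsOpen dom :=
  IsOpen.inter (isOpen_lt continuous_const continuous_fst)
    (isOpen_lt continuous_const continuous_snd)

lemma ei_msum {k : ℕ} (c : ℝ) (g : Fin k → ℝ) : c * ∑ i, g i = ∑ i, c * g i :=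
  Finset.mul_sum _ _ _

lemma ei_swapmul {k : ℕ} (a b : Fin k → ℝ) (M : Fin k → Fin k → ℝ) :
    ∑ j, a j * ∑ i, b i * M i j = ∑ i, b i * ∑ j, a j * M i j := by
  simp only [Finset.mul_sum]
  rw [Finset.sum_comm]
  exact Finset.sum_congr rfl fun i _ => Finset.sum_congr rfl fun j _ => by ring

lemma ei_swapmul2 {k : ℕ} (a : Fin k → ℝ) (M : Fin k → Fin k → ℝ) :
    ∑ j, a j * ∑ i, M i j = ∑ i, ∑ j, a j * M i j := by
  simp only [Finset.mul_sum]
  rw [Finset.sum_comm]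

lemma ei_combine (k : ℕ) (r e Kv β σ pv drt det dKt : ℝ)
    (uq f l drx dex dpx dut dfxx dlxx dPhi dB : Fin k → ℝ)
    (dux Gq dGx : Fin k → Fin k → ℝ)
    (hKv : Kv = (1/2) * ∑ j, (uq j)^2)
    (hp : β * pv = -(r^2 * σ))
    (hdKt : dKt = ∑ j, uq j * dut j)
    (hM : drt + (∑ i, (r * dux i i + uq i * drx i)) - (∑ i, dfxx i) = 0)
    (hP : ∀ j, (r * dut j + uq j * drt)
      + (∑ i, (uq i * (r * dux i j + uq j * drx i) + r * uq j * dux i i)) + dpx j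
      - (∑ i, (dGx i j + f i * dux i j + uq j * dfxx i)) = 0)
    (hEn : (r * (det + dKt) + (e + Kv) * drt)
      + (∑ i, (uq i * ((r * (dex i + ∑ j, uq j * dux i j) + (e + Kv) * drx i) + dpx i)
          + (r * (e + Kv) + pv) * dux i i))
      - (∑ i, (dlxx i + Kv * dfxx i + f i * (∑ j, uq j * dux i j)
          + ∑ j, (Gq i j * dux i j + uq j * dGx i j))) = 0) :
    r * ((σ * drt + β * det) + ∑ i, uq i * (σ * drx i + β * dex i))
      + (∑ i, ((e * β - r * σ) * dfxx i + f i * dPhi i - β * dlxx i - l i * dB i))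
      - (∑ i, f i * dPhi i) + (∑ i, l i * dB i)
      - β * ∑ i, ∑ j, Gq i j * dux i j = 0 := by
  have h2K : ∑ j, (uq j)^2 = 2 * Kv := by rw [hKv]; ring
  have hM' : drt + (r * (∑ i, dux i i) + ∑ i, uq i * drx i) - (∑ i, dfxx i) = 0 := by
    rw [ei_msum, ← Finset.sum_add_distrib]; exact hM
  have hEn' : r * det + r * dKt + (e + Kv) * drt
      + (r * (∑ i, uq i * dex i) + r * (∑ i, uq i * ∑ j, uq j * dux i j)
        + (e + Kv) * (∑ i, uq i * drx i) + (∑ i, uq i * dpx i)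
        + (r * (e + Kv) + pv) * (∑ i, dux i i))
      - ((∑ i, dlxx i) + Kv * (∑ i, dfxx i) + (∑ i, f i * ∑ j, uq j * dux i j)
        + ((∑ i, ∑ j, Gq i j * dux i j) + (∑ i, ∑ j, uq j * dGx i j))) = 0 := by
    have e1 : (∑ i, (uq i * ((r * (dex i + ∑ j, uq j * dux i j) + (e + Kv) * drx i) + dpx i)
          + (r * (e + Kv) + pv) * dux i i))
        = r * (∑ i, uq i * dex i) + r * (∑ i, uq i * ∑ j, uq j * dux i j)
          + (e + Kv) * (∑ i, uq i * drx i) + (∑ i, uq i * dpx i)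
          + (r * (e + Kv) + pv) * (∑ i, dux i i) := by
      rw [ei_msum, ei_msum, ei_msum, ei_msum, ← Finset.sum_add_distrib,
        ← Finset.sum_add_distrib, ← Finset.sum_add_distrib, ← Finset.sum_add_distrib]
      exact Finset.sum_congr rfl fun i _ => by ring
    have e2 : (∑ i, (dlxx i + Kv * dfxx i + f i * (∑ j, uq j * dux i j)
          + ∑ j, (Gq i j * dux i j + uq j * dGx i j)))
        = (∑ i, dlxx i) + Kv * (∑ i, dfxx i) + (∑ i, f i * ∑ j, uq j * dux i j)
          + ((∑ i, ∑ j, Gq i j * dux i j) + (∑ i, ∑ j, uq j * dGx i j)) := by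
      rw [ei_msum, ← Finset.sum_add_distrib, ← Finset.sum_add_distrib,
        ← Finset.sum_add_distrib, ← Finset.sum_add_distrib]
      exact Finset.sum_congr rfl fun i _ => by rw [Finset.sum_add_distrib]
    rw [← e1, ← e2]
    calc _ = (r * (det + dKt) + (e + Kv) * drt)
      + (∑ i, (uq i * ((r * (dex i + ∑ j, uq j * dux i j) + (e + Kv) * drx i) + dpx i)
          + (r * (e + Kv) + pv) * dux i i))
      - (∑ i, (dlxx i + Kv * dfxx i + f i * (∑ j, uq j * dux i j)
          + ∑ j, (Gq i j * dux i j + uq j * dGx i j))) := by ring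
      _ = 0 := hEn
  have hP' : ∀ j, (r * dut j + uq j * drt)
      + (r * (∑ i, uq i * dux i j) + uq j * (∑ i, uq i * drx i)
         + (r * uq j) * (∑ i, dux i i)) + dpx j
      - ((∑ i, dGx i j) + (∑ i, f i * dux i j) + uq j * (∑ i, dfxx i)) = 0 := by
    intro j
    have e3 : (∑ i, (uq i * (r * dux i j + uq j * drx i) + r * uq j * dux i i))
        = r * (∑ i, uq i * dux i j) + uq j * (∑ i, uq i * drx i)
          + (r * uq j) * (∑ i, dux i i) := by
      rw [ei_msum, ei_msum, ei_msum, ← Finset.sum_add_distrib, ← Finset.sum_add_distrib]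
      exact Finset.sum_congr rfl fun i _ => by ring
    have e4 : (∑ i, (dGx i j + f i * dux i j + uq j * dfxx i))
        = (∑ i, dGx i j) + (∑ i, f i * dux i j) + uq j * (∑ i, dfxx i) := by
      rw [ei_msum, ← Finset.sum_add_distrib, ← Finset.sum_add_distrib]
    rw [← e3, ← e4]
    exact hP j
  have hKin' : r * dKt + 2 * Kv * drt
      + (r * (∑ i, uq i * ∑ j, uq j * dux i j) + 2 * Kv * (∑ i, uq i * drx i)
        + 2 * Kv * r * (∑ i, dux i i)) + (∑ i, uq i * dpx i)
      - ((∑ i, ∑ j, uq j * dGx i j) + (∑ i, f i * ∑ j, uq j * dux i j)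
        + 2 * Kv * (∑ i, dfxx i)) = 0 := by
    have e5 : ∑ j, uq j * ((r * dut j + uq j * drt)
        + (r * (∑ i, uq i * dux i j) + uq j * (∑ i, uq i * drx i)
           + (r * uq j) * (∑ i, dux i i)) + dpx j
        - ((∑ i, dGx i j) + (∑ i, f i * dux i j) + uq j * (∑ i, dfxx i))) = 0 :=
      Finset.sum_eq_zero fun j _ => by rw [hP' j, mul_zero]
    have e6 : ∑ j, uq j * ((r * dut j + uq j * drt)
        + (r * (∑ i, uq i * dux i j) + uq j * (∑ i, uq i * drx i)
           + (r * uq j) * (∑ i, dux i i)) + dpx j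
        - ((∑ i, dGx i j) + (∑ i, f i * dux i j) + uq j * (∑ i, dfxx i)))
        = ∑ j, (r * (uq j * dut j) + (uq j)^2 * drt
            + (r * (uq j * ∑ i, uq i * dux i j) + (uq j)^2 * (∑ i, uq i * drx i)
              + (uq j)^2 * (r * (∑ i, dux i i)))
            + uq j * dpx j
            - (uq j * (∑ i, dGx i j) + uq j * (∑ i, f i * dux i j)
              + (uq j)^2 * (∑ i, dfxx i))) :=
      Finset.sum_congr rfl fun j _ => by ring
    rw [e6] at e5
    rw [Finset.sum_sub_distrib, Finset.sum_add_distrib, Finset.sum_add_distrib,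
      Finset.sum_add_distrib, Finset.sum_add_distrib, Finset.sum_add_distrib,
      Finset.sum_add_distrib, Finset.sum_add_distrib] at e5
    rw [← ei_msum r (fun j => uq j * dut j), ← ei_msum r (fun j => uq j * ∑ i, uq i * dux i j),
      ← Finset.sum_mul, ← Finset.sum_mul, ← Finset.sum_mul, ← Finset.sum_mul] at e5
    rw [h2K] at e5
    rw [ei_swapmul uq uq dux, ei_swapmul uq f dux, ei_swapmul2 uq dGx] at e5
    rw [← hdKt] at e5
    calc r * dKt + 2 * Kv * drt
      + (r * (∑ i, uq i * ∑ j, uq j * dux i j) + 2 * Kv * (∑ i, uq i * drx i)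
        + 2 * Kv * r * (∑ i, dux i i)) + (∑ i, uq i * dpx i)
      - ((∑ i, ∑ j, uq j * dGx i j) + (∑ i, f i * ∑ j, uq j * dux i j)
        + 2 * Kv * (∑ i, dfxx i))
        = r * dKt + 2 * Kv * drt
          + (r * (∑ i, uq i * ∑ j, uq j * dux i j) + 2 * Kv * (∑ i, uq i * drx i)
            + 2 * Kv * (r * (∑ i, dux i i))) + (∑ j, uq j * dpx j)
          - ((∑ i, ∑ j, uq j * dGx i j) + (∑ i, f i * ∑ j, uq j * dux i j)
            + 2 * Kv * (∑ i, dfxx i)) := by ring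
      _ = 0 := e5
  have g1 : ∑ i, uq i * (σ * drx i + β * dex i)
      = σ * (∑ i, uq i * drx i) + β * (∑ i, uq i * dex i) := by
    rw [ei_msum, ei_msum, ← Finset.sum_add_distrib]
    exact Finset.sum_congr rfl fun i _ => by ring
  have g2 : ∑ i, ((e * β - r * σ) * dfxx i + f i * dPhi i - β * dlxx i - l i * dB i)
      = (e * β - r * σ) * (∑ i, dfxx i) + (∑ i, f i * dPhi i) - β * (∑ i, dlxx i)
        - (∑ i, l i * dB i) := by
    rw [ei_msum, ei_msum, ← Finset.sum_add_distrib, ← Finset.sum_sub_distrib,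
      ← Finset.sum_sub_distrib]
  rw [g1, g2]
  linear_combination β * hEn' - β * hKin' + ((Kv - e) * β + r * σ) * hM'
    - (∑ i, dux i i) * hp

end EIHelpers

/-- **Entropy identity for the regularized Euler system:** a smooth solution of the
regularized Euler system with `𝕘 = 𝔾 + f ⊗ u` and `h = l - ½|u|² f` satisfies the
pointwise identity
`ρ(∂_t s + u·∇s) + div((e s_e - ρ s_ρ) f - s_e l) - f·∇(e s_e - ρ s_ρ) + l·∇s_e - s_e (𝔾 : ∇u) = 0`. -/
theorem entropy_identity
    (n : ℕ) (hn : 0 < n)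
    (s : ℝ × ℝ → ℝ) (hs : ContDiffOn ℝ 2 s dom)
    (hsepos : ∀ x ∈ dom, 0 < sE s x)
    -- the fields of the solution
    (ρ E : ℝ × (Fin n → ℝ) → ℝ)
    (m fvec lvec : ℝ × (Fin n → ℝ) → Fin n → ℝ)
    (G : ℝ × (Fin n → ℝ) → Fin n → Fin n → ℝ)
    (hρ : ContDiff ℝ 2 ρ) (hE : ContDiff ℝ 2 E) (hm : ContDiff ℝ 2 m)
    (hfvec : ContDiff ℝ 2 fvec) (hlvec : ContDiff ℝ 2 lvec) (hG : ContDiff ℝ 2 G)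
    (hρpos : ∀ q, 0 < ρ q)
    -- derived fields: velocity, internal energy, entropy, pressure
    (u : ℝ × (Fin n → ℝ) → Fin n → ℝ) (hu : ∀ q i, u q i = m q i / ρ q)
    (eI : ℝ × (Fin n → ℝ) → ℝ)
    (heI : ∀ q, eI q = E q / ρ q - (1 / 2) * ∑ i, (u q i) ^ 2)
    (heIpos : ∀ q, 0 < eI q)
    (S seF sρF pF : ℝ × (Fin n → ℝ) → ℝ)
    (hS : ∀ q, S q = s (ρ q, eI q))
    (hseF : ∀ q, seF q = sE s (ρ q, eI q))
    (hsρF : ∀ q, sρF q = sRho s (ρ q, eI q))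
    (hpF : ∀ q, pF q = -(ρ q) ^ 2 * sρF q / seF q)
    -- the viscous fluxes `𝕘 = 𝔾 + f ⊗ u` and `h = l - ½|u|² f`
    (g : ℝ × (Fin n → ℝ) → Fin n → Fin n → ℝ)
    (hg : ∀ q i j, g q i j = G q i j + fvec q i * u q j)
    (h : ℝ × (Fin n → ℝ) → Fin n → ℝ)
    (hh : ∀ q i, h q i = lvec q i - (1 / 2) * (∑ k, (u q k) ^ 2) * fvec q i)
    -- the regularized Euler system
    (mass : ∀ q : ℝ × (Fin n → ℝ), 0 ≤ q.1 →
      Dt ρ q + (∑ i, Dx i (fun r => m r i) q) - (∑ i, Dx i (fun r => fvec r i) q) = 0)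
    (momentum : ∀ q : ℝ × (Fin n → ℝ), 0 ≤ q.1 → ∀ j,
      Dt (fun r => m r j) q + (∑ i, Dx i (fun r => u r i * m r j) q) + Dx j pF q
        - (∑ i, Dx i (fun r => g r i j) q) = 0)
    (energy : ∀ q : ℝ × (Fin n → ℝ), 0 ≤ q.1 →
      Dt E q + (∑ i, Dx i (fun r => u r i * (E r + pF r)) q)
        - (∑ i, Dx i (fun r => h r i + ∑ j, g r i j * u r j) q) = 0) :
    -- the entropy identity
    ∀ q : ℝ × (Fin n → ℝ), 0 ≤ q.1 →
      ρ q * (Dt S q + ∑ i, u q i * Dx i S q)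
        + (∑ i, Dx i (fun r => (eI r * seF r - ρ r * sρF r) * fvec r i - seF r * lvec r i) q)
        - (∑ i, fvec q i * Dx i (fun r => eI r * seF r - ρ r * sρF r) q)
        + (∑ i, lvec q i * Dx i seF q)
        - seF q * ∑ i, ∑ j, G q i j * Dx i (fun r => u r j) q = 0 := by
  
  intro q hq
  -- basic positivity facts
  have hρne : ρ q ≠ 0 := (hρpos q).ne'
  have hx0 : (ρ q, eI q) ∈ dom := ⟨hρpos q, heIpos q⟩
  -- differentiability of the basic fields at q
  have hρd : DifferentiableAt ℝ ρ q := (hρ.differentiable (by norm_num)) q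
  have hEd : DifferentiableAt ℝ E q := (hE.differentiable (by norm_num)) q
  have hmd : ∀ j, DifferentiableAt ℝ (fun r => m r j) q := fun j =>
    (differentiableAt_pi.mp ((hm.differentiable (by norm_num)) q)) j
  have hfd : ∀ j, DifferentiableAt ℝ (fun r => fvec r j) q := fun j =>
    (differentiableAt_pi.mp ((hfvec.differentiable (by norm_num)) q)) j
  have hld : ∀ j, DifferentiableAt ℝ (fun r => lvec r j) q := fun j =>
    (differentiableAt_pi.mp ((hlvec.differentiable (by norm_num)) q)) j
  have hGd : ∀ i j, DifferentiableAt ℝ (fun r => G r i j) q := fun i j =>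
    (differentiableAt_pi.mp
      ((differentiableAt_pi.mp ((hG.differentiable (by norm_num)) q)) i)) j
  have hufun : ∀ j, (fun r => u r j) = fun r => m r j / ρ r := fun j =>
    funext fun r => hu r j
  have hud : ∀ j, DifferentiableAt ℝ (fun r => u r j) q := fun j => by
    rw [hufun j]; exact ei_fddiv (hmd j) hρd hρne
  have hKd : DifferentiableAt ℝ (fun r => 1 / 2 * ∑ k, u r k ^ 2) q :=
    DifferentiableAt.const_mul (DifferentiableAt.fun_sum fun k _ => (hud k).pow 2) _
  have heIfun : eI = fun r => E r / ρ r - 1 / 2 * ∑ i, u r i ^ 2 := funext heI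
  have heId : DifferentiableAt ℝ eI q := by
    rw [heIfun]
    exact (ei_fddiv hEd hρd hρne).sub
      (DifferentiableAt.const_mul (DifferentiableAt.fun_sum fun k _ => (hud k).pow 2) _)
  have hwd : DifferentiableAt ℝ (fun r => (ρ r, eI r)) q := hρd.prodMk heId
  have hs2 : ContDiffAt ℝ 2 s (ρ q, eI q) := hs.contDiffAt (ei_isOpen_dom.mem_nhds hx0)
  have hsd : DifferentiableAt ℝ s (ρ q, eI q) := hs2.differentiableAt (by norm_num)
  have hs3 : ContDiffAt ℝ 1 (fderiv ℝ s) (ρ q, eI q) := hs2.fderiv_right (by norm_num)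
  have hsE1 : DifferentiableAt ℝ (sE s) (ρ q, eI q) :=
    (hs3.clm_apply contDiffAt_const).differentiableAt (by norm_num)
  have hsR1 : DifferentiableAt ℝ (sRho s) (ρ q, eI q) :=
    (hs3.clm_apply contDiffAt_const).differentiableAt (by norm_num)
  have hseFfun : seF = fun r => sE s (ρ r, eI r) := funext hseF
  have hseFd : DifferentiableAt ℝ seF q := by
    rw [hseFfun]; exact hsE1.comp q hwd
  have hsρFfun : sρF = fun r => sRho s (ρ r, eI r) := funext hsρF
  have hsρFd : DifferentiableAt ℝ sρF q := by
    rw [hsρFfun]; exact hsR1.comp q hwd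
  have hseFne : seF q ≠ 0 := by rw [hseF q]; exact (hsepos _ hx0).ne'
  have hpFfun : pF = fun r => -(ρ r) ^ 2 * sρF r / seF r := funext hpF
  have hpFd : DifferentiableAt ℝ pF q := by
    rw [hpFfun]; exact ei_fddiv (((hρd.pow 2).neg).mul hsρFd) hseFd hseFne
  have hφd : DifferentiableAt ℝ (fun r => eI r * seF r - ρ r * sρF r) q :=
    (heId.mul hseFd).sub (hρd.mul hsρFd)
  -- pointwise function identities
  have hmfun : ∀ j, (fun r => m r j) = fun r => ρ r * u r j := fun j =>
    funext fun r => by rw [hu r j]; field_simp [(hρpos r).ne']; try ring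
  have hmval : ∀ j, m q j = ρ q * u q j := fun j => by rw [hu q j]; field_simp [(hρpos q).ne']; try ring
  have hEfun : E = fun r => ρ r * (eI r + 1 / 2 * ∑ k, u r k ^ 2) :=
    funext fun r => by rw [heI r]; field_simp [(hρpos r).ne']; try ring
  have hEval : E q = ρ q * (eI q + 1 / 2 * ∑ k, u q k ^ 2) := by
    rw [heI q]; field_simp [(hρpos q).ne']; try ring
  -- derivative expansions
  have hdK : ∀ v, fderiv ℝ (fun r => 1 / 2 * ∑ k, u r k ^ 2) q v
      = ∑ j, u q j * fderiv ℝ (fun r => u r j) q v := by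
    intro v
    rw [ei_fdcmul (DifferentiableAt.fun_sum fun k _ => (hud k).fun_pow 2) (1 / 2) v,
      ei_fdsum (fun k => (hud k).fun_pow 2) v]
    have h3 : ∀ k, fderiv ℝ (fun r => u r k ^ 2) q v
        = 2 * (u q k * fderiv ℝ (fun r => u r k) q v) := fun k => by
      have e : (fun r : ℝ × (Fin n → ℝ) => u r k ^ 2) = fun r => u r k * u r k :=
        funext fun r => by ring
      rw [e, ei_fdmul (hud k) (hud k) v]; ring
    rw [Finset.sum_congr rfl fun k _ => h3 k, ei_msum]
    exact Finset.sum_congr rfl fun j _ => by ring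
  have hdm : ∀ (j : Fin n) v, fderiv ℝ (fun r => m r j) q v
      = ρ q * fderiv ℝ (fun r => u r j) q v + u q j * fderiv ℝ ρ q v := fun j v => by
    rw [hmfun j]; exact ei_fdmul hρd (hud j) v
  have hdum : ∀ (i j : Fin n) v, fderiv ℝ (fun r => u r i * m r j) q v
      = u q i * (ρ q * fderiv ℝ (fun r => u r j) q v + u q j * fderiv ℝ ρ q v)
        + ρ q * u q j * fderiv ℝ (fun r => u r i) q v := fun i j v => by
    have h1 := ei_fdmul (hud i) (hmd j) v
    rw [hdm j v, hmval j] at h1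
    exact h1
  have hgfun : ∀ i j, (fun r => g r i j) = fun r => G r i j + fvec r i * u r j :=
    fun i j => funext fun r => hg r i j
  have hdg : ∀ (i j : Fin n) v, fderiv ℝ (fun r => g r i j) q v
      = fderiv ℝ (fun r => G r i j) q v + fvec q i * fderiv ℝ (fun r => u r j) q v
        + u q j * fderiv ℝ (fun r => fvec r i) q v := fun i j v => by
    rw [hgfun i j, ei_fdadd (hGd i j) ((hfd i).fun_mul (hud j)) v,
      ei_fdmul (hfd i) (hud j) v]
    ring
  have hdE : ∀ v, fderiv ℝ E q v
      = ρ q * (fderiv ℝ eI q v + ∑ j, u q j * fderiv ℝ (fun r => u r j) q v)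
        + (eI q + 1 / 2 * ∑ k, u q k ^ 2) * fderiv ℝ ρ q v := fun v => by
    conv_lhs => rw [hEfun]
    rw [ei_fdmul hρd (heId.fun_add hKd) v, ei_fdadd heId hKd v, hdK v]
  have hdflux1 : ∀ (i : Fin n) v, fderiv ℝ (fun r => u r i * (E r + pF r)) q v
      = u q i * (fderiv ℝ E q v + fderiv ℝ pF q v)
        + (ρ q * (eI q + 1 / 2 * ∑ k, u q k ^ 2) + pF q)
          * fderiv ℝ (fun r => u r i) q v := fun i v => by
    have h1 := ei_fdmul (hud i) (hEd.fun_add hpFd) v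
    rw [ei_fdadd hEd hpFd v] at h1
    rw [h1, hEval]
  have hflux2fun : ∀ i : Fin n, (fun r => h r i + ∑ j, g r i j * u r j)
      = fun r => lvec r i + (1 / 2 * ∑ k, u r k ^ 2) * fvec r i + ∑ j, G r i j * u r j :=
    fun i => funext fun r => by
      have hsum : ∑ j, g r i j * u r j
          = (∑ j, G r i j * u r j) + (∑ j, u r j ^ 2) * fvec r i := by
        rw [Finset.sum_mul, ← Finset.sum_add_distrib]
        exact Finset.sum_congr rfl fun j _ => by rw [hg r i j]; ring
      rw [hh r i, hsum]; ring
  have hdflux2 : ∀ (i : Fin n) v, fderiv ℝ (fun r => h r i + ∑ j, g r i j * u r j) q v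
      = fderiv ℝ (fun r => lvec r i) q v
        + (1 / 2 * ∑ k, u q k ^ 2) * fderiv ℝ (fun r => fvec r i) q v
        + fvec q i * (∑ j, u q j * fderiv ℝ (fun r => u r j) q v)
        + ∑ j, (G q i j * fderiv ℝ (fun r => u r j) q v
            + u q j * fderiv ℝ (fun r => G r i j) q v) := fun i v => by
    rw [hflux2fun i]
    rw [ei_fdadd ((hld i).fun_add (hKd.fun_mul (hfd i)))
      (DifferentiableAt.fun_sum fun j _ => (hGd i j).fun_mul (hud j)) v]
    rw [ei_fdadd (hld i) (hKd.fun_mul (hfd i)) v]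
    rw [ei_fdmul hKd (hfd i) v]
    rw [hdK v]
    rw [ei_fdsum (fun j => (hGd i j).fun_mul (hud j)) v]
    rw [Finset.sum_congr rfl fun j _ => ei_fdmul (hGd i j) (hud j) v]
    ring
  have hSfun : S = s ∘ fun r => (ρ r, eI r) := funext hS
  have hchain : ∀ v, fderiv ℝ S q v
      = sρF q * fderiv ℝ ρ q v + seF q * fderiv ℝ eI q v := by
    intro v
    have hcomp : fderiv ℝ (s ∘ fun r => (ρ r, eI r)) q
        = (fderiv ℝ s (ρ q, eI q)).comp (fderiv ℝ (fun r => (ρ r, eI r)) q) :=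
      fderiv_comp q hsd hwd
    rw [hSfun, hcomp, ContinuousLinearMap.comp_apply, hρd.fderiv_prodMk heId,
      ContinuousLinearMap.prod_apply]
    have hbl : fderiv ℝ s (ρ q, eI q) (fderiv ℝ ρ q v, fderiv ℝ eI q v)
        = fderiv ℝ ρ q v * sRho s (ρ q, eI q) + fderiv ℝ eI q v * sE s (ρ q, eI q) := by
      have hv : ((fderiv ℝ ρ q v, fderiv ℝ eI q v) : ℝ × ℝ)
          = fderiv ℝ ρ q v • ((1 : ℝ), (0 : ℝ)) + fderiv ℝ eI q v • ((0 : ℝ), (1 : ℝ)) := by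
        simp [Prod.ext_iff]
      rw [hv, map_add, map_smul, map_smul, smul_eq_mul, smul_eq_mul]
      rfl
    rw [hbl, hseF q, hsρF q]; ring
  have hdflux3 : ∀ (i : Fin n) v,
      fderiv ℝ (fun r => (eI r * seF r - ρ r * sρF r) * fvec r i - seF r * lvec r i) q v
      = (eI q * seF q - ρ q * sρF q) * fderiv ℝ (fun r => fvec r i) q v
        + fvec q i * fderiv ℝ (fun r => eI r * seF r - ρ r * sρF r) q v
        - seF q * fderiv ℝ (fun r => lvec r i) q v
        - lvec q i * fderiv ℝ seF q v := fun i v => by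
    rw [ei_fdsub (hφd.fun_mul (hfd i)) (hseFd.fun_mul (hld i)) v,
      ei_fdmul hφd (hfd i) v, ei_fdmul hseFd (hld i) v]
    ring
  have hp' : seF q * pF q = -((ρ q) ^ 2 * sρF q) := by
    rw [hpF q]; field_simp [hseFne]; try ring
  have hmass := mass q hq
  have hmom := momentum q hq
  have hen := energy q hq
  simp only [Dt, Dx] at hmass hmom hen ⊢
  simp only [hdm, hdum, hdg] at hmass hmom
  simp only [hdflux1, hdflux2, hdE] at hen
  simp only [hchain, hdflux3]
  exact ei_combine n (ρ q) (eI q) (1 / 2 * ∑ k, u q k ^ 2) (seF q) (sρF q) (pF q)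
    (fderiv ℝ ρ q (1, 0)) (fderiv ℝ eI q (1, 0))
    (∑ j, u q j * fderiv ℝ (fun r => u r j) q (1, 0))
    (u q) (fvec q) (lvec q)
    (fun i => fderiv ℝ ρ q (0, Pi.single i 1))
    (fun i => fderiv ℝ eI q (0, Pi.single i 1))
    (fun i => fderiv ℝ pF q (0, Pi.single i 1))
    (fun j => fderiv ℝ (fun r => u r j) q (1, 0))
    (fun i => fderiv ℝ (fun r => fvec r i) q (0, Pi.single i 1))
    (fun i => fderiv ℝ (fun r => lvec r i) q (0, Pi.single i 1))
    (fun i => fderiv ℝ (fun r => eI r * seF r - ρ r * sρF r) q (0, Pi.single i 1))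
    (fun i => fderiv ℝ seF q (0, Pi.single i 1))
    (fun i j => fderiv ℝ (fun r => u r j) q (0, Pi.single i 1)) (G q)
    (fun i j => fderiv ℝ (fun r => G r i j) q (0, Pi.single i 1))
    rfl hp' rfl hmass hmom hen
end
end

section
/- Negativity of the entropy-production quadratic form J: Fix (ρ,e) ∈ (0,∞)² and real numbers a ≥ 0, d ≥ 0. Define the quadratic form J on pairs (X,Y) ∈ ℝ^d × ℝ^d by J = (X,Y)·N·(X,Y)^T where n₁₁ = (d−a) ρ s_ρ s_e^{−1} s_{ρe} + a ρ^{−1} ∂_ρ(ρ² s_ρ), 2 n₁₂ = (d−a) ρ s_ρ s_e^{−1} s_{ee} + (d+a) ρ s_{ρe}, and n₂₂ = d ρ s_{ee}. Then J is negative semi-definite if and only if a·d·det(Σ) − (1/4)(d−a)² ρ^{−2} s_e² p_e² ≥ 0. -/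
noncomputable section

open Real

lemma pE_eq (s : ℝ × ℝ → ℝ) (hs : ContDiffOn ℝ 2 s dom) (z : ℝ × ℝ) (hz : z ∈ dom)
    (hne : sE s z ≠ 0) :
    pE s z = (-z.1 ^ 2 * sRhoE s z * sE s z - -z.1 ^ 2 * sRho s z * sEE s z) / (sE s z) ^ 2 := by
  have hopen : IsOpen dom :=
    (isOpen_lt continuous_const continuous_fst).inter (isOpen_lt continuous_const continuous_snd)
  have hs2 : ContDiffAt ℝ 2 s z := hs.contDiffAt (hopen.mem_nhds hz)
  -- fderiv of s is C¹ near z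
  have hf1 : ContDiffAt ℝ 1 (fderiv ℝ s) z := by
    have := hs2.fderiv_right (m := 1) (by norm_num)
    exact this
  have hdf : DifferentiableAt ℝ (fderiv ℝ s) z := hf1.differentiableAt one_ne_zero
  have hsymm := hs2.isSymmSndFDerivAt (by norm_num)
  -- sRho differentiable, and its D2 equals sRhoE
  have happly : ∀ v : ℝ × ℝ, DifferentiableAt ℝ (fun x => fderiv ℝ s x v) z ∧
      fderiv ℝ (fun x => fderiv ℝ s x v) z = (fderiv ℝ (fderiv ℝ s) z).flip v := by
    intro v
    have h := (ContinuousLinearMap.apply ℝ ℝ v).hasFDerivAt.comp z hdf.hasFDerivAt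
    have h' : HasFDerivAt (fun x => fderiv ℝ s x v)
        (((ContinuousLinearMap.apply ℝ ℝ v).comp (fderiv ℝ (fderiv ℝ s) z))) z := h
    refine ⟨h'.differentiableAt, ?_⟩
    rw [h'.fderiv]; ext <;> simp
  have hD2sRho : fderiv ℝ (sRho s) z (0,1) = sRhoE s z := by
    have := (happly (1,0)).2
    show fderiv ℝ (fun x => fderiv ℝ s x (1,0)) z (0,1) = _
    rw [this]
    show fderiv ℝ (fderiv ℝ s) z (0,1) (1,0) = fderiv ℝ (fun x => fderiv ℝ s x (0,1)) z (1,0)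
    rw [(happly (0,1)).2]
    exact hsymm (0,1) (1,0)
  -- differentiability of press at z
  have hRd : DifferentiableAt ℝ (sRho s) z := (happly (1,0)).1
  have hEd : DifferentiableAt ℝ (sE s) z := (happly (0,1)).1
  have hu : DifferentiableAt ℝ (fun x : ℝ×ℝ => -x.1 ^ 2 * sRho s x) z :=
    ((differentiableAt_fst.pow 2).neg).mul hRd
  have hpress : DifferentiableAt ℝ (press s) z := by
    have := hu.mul (hEd.inv hne)
    simp only [mul_comm] at this
    unfold press
    simp only [div_eq_mul_inv]
    exact hu.mul (hEd.inv hne)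
  have hg : HasDerivAt (fun t : ℝ => ((z.1, t) : ℝ × ℝ)) ((0:ℝ), (1:ℝ)) z.2 :=
    HasDerivAt.prodMk (hasDerivAt_const z.2 z.1) (hasDerivAt_id z.2)
  have hline : HasDerivAt (fun t : ℝ => press s (z.1, t)) (fderiv ℝ (press s) z (0,1)) z.2 :=
    by have h := hpress.hasFDerivAt.comp_hasDerivAt z.2 hg; exact h
  have hRt : HasDerivAt (fun t : ℝ => sRho s (z.1, t)) (sRhoE s z) z.2 := by
    have h := hRd.hasFDerivAt.comp_hasDerivAt z.2 hg
    rwa [hD2sRho] at h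
  have hEE : fderiv ℝ (sE s) z (0,1) = sEE s z := rfl
  have hEt : HasDerivAt (fun t : ℝ => sE s (z.1, t)) (sEE s z) z.2 := by
    have h := hEd.hasFDerivAt.comp_hasDerivAt z.2 hg
    rwa [hEE] at h
  have hQ : HasDerivAt (fun t : ℝ => -z.1 ^ 2 * sRho s (z.1, t) / sE s (z.1, t))
      (((0 * sRho s z + -z.1 ^ 2 * sRhoE s z) * sE s z - -z.1 ^ 2 * sRho s z * sEE s z)
        / sE s z ^ 2) z.2 := by
    have h := ((hasDerivAt_const z.2 (-z.1 ^ 2)).mul hRt).div hEt hne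
    exact h
  have huniq : fderiv ℝ (press s) z (0,1) =
      ((0 * sRho s z + -z.1 ^ 2 * sRhoE s z) * sE s z - -z.1 ^ 2 * sRho s z * sEE s z)
        / sE s z ^ 2 :=
    hline.unique hQ
  show fderiv ℝ (press s) z (0,1) = _
  rw [huniq]
  ring

set_option maxHeartbeats 2000000 in
/-- **Negativity of the entropy-production quadratic form `J`:** with
`n₁₁ = (d-a) ρ s_ρ s_e⁻¹ s_{ρe} + a ρ⁻¹ ∂_ρ(ρ² s_ρ)`,
`2 n₁₂ = (d-a) ρ s_ρ s_e⁻¹ s_{ee} + (d+a) ρ s_{ρe}`, `n₂₂ = d ρ s_{ee}`,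
the quadratic form `J(X,Y) = n₁₁|X|² + 2 n₁₂ X·Y + n₂₂|Y|²` is negative semi-definite
if and only if `a d det Σ - (1/4)(d-a)² ρ⁻² s_e² p_e² ≥ 0`. -/
theorem J_negative_semidefinite_iff
    (s : ℝ × ℝ → ℝ) (hs : ContDiffOn ℝ 2 s dom)
    (hse : ∀ x ∈ dom, 0 < sE s x) (hconv : Convexity s)
    (z : ℝ × ℝ) (hz : z ∈ dom)
    (a dcoef : ℝ) (ha : 0 ≤ a) (hd : 0 ≤ dcoef)
    (n11 n12 n22 : ℝ)
    (e11 : n11 = (dcoef - a) * z.1 * sRho s z * (sE s z)⁻¹ * sRhoE s z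
      + a * z.1⁻¹ * dRho2sRho s z)
    (e12 : 2 * n12 = (dcoef - a) * z.1 * sRho s z * (sE s z)⁻¹ * sEE s z
      + (dcoef + a) * z.1 * sRhoE s z)
    (e22 : n22 = dcoef * z.1 * sEE s z)
    (d : ℕ) (hdim : 0 < d) :
    (∀ X Y : Fin d → ℝ,
        n11 * (∑ i, X i * X i) + 2 * n12 * (∑ i, X i * Y i) + n22 * (∑ i, Y i * Y i) ≤ 0)
      ↔ 0 ≤ a * dcoef * detSigma s z
          - (1 / 4) * (dcoef - a) ^ 2 / z.1 ^ 2 * (sE s z) ^ 2 * (pE s z) ^ 2 := by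
  have hρ : 0 < z.1 := hz.1
  have hρne : z.1 ≠ 0 := ne_of_gt hρ
  have hsez : 0 < sE s z := hse z hz
  have hne : sE s z ≠ 0 := ne_of_gt hsez
  obtain ⟨hA, hE, hΔ⟩ := hconv z hz
  have hpe := pE_eq s hs z hz hne
  have h12 : n12 = ((dcoef - a) * z.1 * sRho s z * (sE s z)⁻¹ * sEE s z
      + (dcoef + a) * z.1 * sRhoE s z) / 2 := by linarith
  -- the key determinant identity
  have hkey : n11 * n22 - n12 ^ 2 = a * dcoef * detSigma s z
      - (1 / 4) * (dcoef - a) ^ 2 / z.1 ^ 2 * (sE s z) ^ 2 * (pE s z) ^ 2 := by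
    rw [e11, e22, h12, hpe, detSigma]
    field_simp
    ring
  constructor
  · intro h
    have hscal : ∀ x y : ℝ,
        n11 * (x * x) + 2 * n12 * (x * y) + n22 * (y * y) ≤ 0 := by
      intro x y
      have hsum : ∀ u v : ℝ,
          (∑ i, (Pi.single (⟨0, hdim⟩ : Fin d) u : Fin d → ℝ) i *
            (Pi.single (⟨0, hdim⟩ : Fin d) v : Fin d → ℝ) i) = u * v := by
        intro u v
        have h1 : ∀ i : Fin d, (Pi.single (⟨0, hdim⟩ : Fin d) u : Fin d → ℝ) i *
            (Pi.single (⟨0, hdim⟩ : Fin d) v : Fin d → ℝ) i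
            = if i = (⟨0, hdim⟩ : Fin d) then u * v else 0 := by
          intro i
          by_cases hi : i = (⟨0, hdim⟩ : Fin d) <;> simp [Pi.single_apply, hi]
        rw [Finset.sum_congr rfl fun i _ => h1 i, Finset.sum_ite_eq']
        simp
      have h0 := h (Pi.single (⟨0, hdim⟩ : Fin d) x) (Pi.single (⟨0, hdim⟩ : Fin d) y)
      rw [hsum x x, hsum x y, hsum y y] at h0
      exact h0
    have hdisc : discrim n11 (2 * n12) n22 ≤ 0 := by
      apply discrim_le_zero_of_nonpos
      intro x
      have := hscal x 1
      nlinarith [this]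
    rw [discrim] at hdisc
    nlinarith [hkey]
  · intro hrhs X Y
    have hdet : 0 ≤ n11 * n22 - n12 ^ 2 := by rw [hkey]; exact hrhs
    have h22 : n22 ≤ 0 := by
      rw [e22]
      nlinarith [mul_nonneg (mul_nonneg hd hρ.le) (neg_nonneg.2 hE.le)]
    have h11 : n11 ≤ 0 := by
      rcases eq_or_lt_of_le hd with hd0 | hd0
      · -- dcoef = 0
        subst hd0
        have hz0 : a * 0 * detSigma s z = 0 := by ring
        rw [hz0] at hrhs
        have h5 : 0 ≤ 1 / 4 * (0 - a) ^ 2 / z.1 ^ 2 * sE s z ^ 2 * pE s z ^ 2 := by positivity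
        have h7 : 1 / 4 * (0 - a) ^ 2 / z.1 ^ 2 * sE s z ^ 2 * pE s z ^ 2 = 0 :=
          le_antisymm (by linarith) h5
        have h8 : (a * pE s z) ^ 2 * (1 / 4 / z.1 ^ 2 * sE s z ^ 2) = 0 := by
          rw [← h7]; ring
        have h9 : (a * pE s z) ^ 2 = 0 := by
          rcases mul_eq_zero.1 h8 with h' | h'
          · exact h'
          · exact absurd h' (by positivity)
        have hap' : a * pE s z = 0 := by
          exact sq_eq_zero_iff.1 h9
        rcases mul_eq_zero.1 hap' with ha0 | hpe0
        · rw [e11, ha0]; norm_num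
        · -- pE s z = 0
          rw [hpe0] at hpe
          have h2 : (-z.1 ^ 2 * sRhoE s z * sE s z - -z.1 ^ 2 * sRho s z * sEE s z) = 0 := by
            rcases div_eq_zero_iff.1 hpe.symm with h' | h'
            · exact h'
            · exact absurd h' (pow_ne_zero 2 hne)
          have hM : sRhoE s z = sRho s z * sEE s z / sE s z := by
            rw [eq_div_iff hne]
            have h3 := pow_ne_zero 2 hρne
            have h4 : z.1 ^ 2 * (sRhoE s z * sE s z - sRho s z * sEE s z) = 0 := by
              linear_combination -h2
            rcases mul_eq_zero.1 h4 with h' | h'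
            · exact absurd h' h3
            · linarith
          rw [detSigma] at hΔ
          have hΔ' : 0 ≤ dRho2sRho s z * sEE s z - z.1 ^ 2 * sRhoE s z ^ 2 := hΔ.le
          have heq : n11 * (z.1 * sE s z ^ 2 * sEE s z)
              = a * sE s z ^ 2 * (dRho2sRho s z * sEE s z - z.1 ^ 2 * sRhoE s z ^ 2) := by
            rw [e11, hM]
            field_simp
            ring
          have hcneg : z.1 * sE s z ^ 2 * sEE s z < 0 := by
            have := mul_pos (mul_pos hρ (pow_pos hsez 2)) (neg_pos.2 hE)
            nlinarith [this]
          have hprod : 0 ≤ n11 * (z.1 * sE s z ^ 2 * sEE s z) := by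
            rw [heq]
            exact mul_nonneg (mul_nonneg ha (sq_nonneg _)) hΔ'
          nlinarith [hprod, hcneg]
      · -- 0 < dcoef
        have h22' : n22 < 0 := by
          rw [e22]
          have := mul_pos (mul_pos hd0 hρ) (neg_pos.2 hE)
          nlinarith [this]
        nlinarith [sq_nonneg n12]
    set SX := ∑ i, X i * X i with hSXdef
    set SXY := ∑ i, X i * Y i with hSXYdef
    set SY := ∑ i, Y i * Y i with hSYdef
    have hSX : 0 ≤ SX := Finset.sum_nonneg fun i _ => mul_self_nonneg _
    have hSY : 0 ≤ SY := Finset.sum_nonneg fun i _ => mul_self_nonneg _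
    have expand : ∀ c1 c2 : ℝ,
        0 ≤ c1 ^ 2 * SX + 2 * c1 * c2 * SXY + c2 ^ 2 * SY := by
      intro c1 c2
      have h0 : (0:ℝ) ≤ ∑ i, (c1 * X i + c2 * Y i) ^ 2 :=
        Finset.sum_nonneg fun i _ => sq_nonneg _
      have heq : ∑ i, (c1 * X i + c2 * Y i) ^ 2
          = c1 ^ 2 * SX + 2 * c1 * c2 * SXY + c2 ^ 2 * SY := by
        rw [hSXdef, hSXYdef, hSYdef, Finset.mul_sum, Finset.mul_sum, Finset.mul_sum,
          ← Finset.sum_add_distrib, ← Finset.sum_add_distrib]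
        exact Finset.sum_congr rfl fun i _ => by ring
      rwa [heq] at h0
    rcases lt_or_eq_of_le h11 with h11' | h11'
    · nlinarith [expand n11 n12, mul_nonneg hdet hSY]
    · have h12z : n12 = 0 := by
        have : n12 ^ 2 ≤ 0 := by nlinarith
        nlinarith [sq_nonneg n12]
      rw [h11', h12z]
      nlinarith [mul_nonneg hSY (neg_nonneg.2 h22)]
end
end

section
/- Shifted negativity of J: Fix (ρ,e) ∈ (0,∞)², a ≥ 0 and d > 0, and let λ ∈ ℝ be defined by d(1+λ) = a. Let N be as in the definition of J (n₁₁ = (d−a) ρ s_ρ s_e^{−1} s_{ρe} + a ρ^{−1} ∂_ρ(ρ² s_ρ), 2 n₁₂ = (d−a) ρ s_ρ s_e^{−1} s_{ee} + (d+a) ρ s_{ρe}, n₂₂ = d ρ s_{ee}) and let Q be the 2×2 block matrix with q₁₁ = ρ s_ρ s_e^{−1} s_{ρe}, q₁₂ = (1/2)(ρ s_ρ s_e^{−1} s_{ee} + ρ s_{ρe}), q₂₂ = ρ s_{ee}, so that (X,Y)·Q·(X,Y)^T represents (ρ/s_e) ∇s_e · ∇s. Then the quadratic form M := N + λ d Q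 is negative semi-definite; if moreover a > 0, then M is negative definite. -/
noncomputable section

open Real

lemma quad_aux (q r x y t : ℝ) (hx : 0 ≤ x) (hy : 0 ≤ y) (hcs : t^2 ≤ x * y) :
    0 ≤ q^2 * x + 2 * (q*r) * t + r^2 * y := by
  rcases eq_or_lt_of_le hy with h | h
  · have ht : t = 0 := by nlinarith [sq_nonneg t]
    rw [ht]
    nlinarith [sq_nonneg q, mul_nonneg (sq_nonneg q) hx, sq_nonneg r]
  · nlinarith [sq_nonneg (q*t + r*y), mul_le_mul_of_nonneg_left hcs (sq_nonneg q)]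

lemma quad_semidef (d : ℕ) (p q r : ℝ) (hp : p ≤ 0) (hr : r ≤ 0) (hpq : q^2 ≤ p * r)
    (X Y : Fin d → ℝ) :
    p * (∑ i, X i * X i) + 2 * q * (∑ i, X i * Y i) + r * (∑ i, Y i * Y i) ≤ 0 := by
  set x := ∑ i, X i * X i with hxdef
  set y := ∑ i, Y i * Y i with hydef
  set t := ∑ i, X i * Y i with htdef
  have hx : 0 ≤ x := Finset.sum_nonneg fun i _ => mul_self_nonneg _
  have hy : 0 ≤ y := Finset.sum_nonneg fun i _ => mul_self_nonneg _
  have hcs : t^2 ≤ x * y := by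
    have := Finset.sum_mul_sq_le_sq_mul_sq Finset.univ X Y
    simpa [sq, hxdef, hydef, htdef, pow_two] using this
  rcases eq_or_lt_of_le hr with h | h
  · have hq : q = 0 := by nlinarith [sq_nonneg q]
    rw [hq, h]
    nlinarith [mul_nonneg (neg_nonneg.2 hp) hx]
  · have key : 0 ≤ r * (p * x + 2 * q * t + r * y) := by
      have h1 := quad_aux q r x y t hx hy hcs
      nlinarith [mul_nonneg (sub_nonneg.2 hpq) hx]
    nlinarith [key]

lemma quad_def (d : ℕ) (p q r : ℝ) (hp : p < 0) (hr : r < 0) (hpq : q^2 < p * r)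
    (X Y : Fin d → ℝ) (hXY : X ≠ 0 ∨ Y ≠ 0) :
    p * (∑ i, X i * X i) + 2 * q * (∑ i, X i * Y i) + r * (∑ i, Y i * Y i) < 0 := by
  set x := ∑ i, X i * X i with hxdef
  set y := ∑ i, Y i * Y i with hydef
  set t := ∑ i, X i * Y i with htdef
  have hx : 0 ≤ x := Finset.sum_nonneg fun i _ => mul_self_nonneg _
  have hy : 0 ≤ y := Finset.sum_nonneg fun i _ => mul_self_nonneg _
  have hcs : t^2 ≤ x * y := by
    have := Finset.sum_mul_sq_le_sq_mul_sq Finset.univ X Y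
    simpa [sq, hxdef, hydef, htdef, pow_two] using this
  have hpos : 0 < x ∨ 0 < y := by
    rcases hXY with h | h
    · obtain ⟨i, hi⟩ := Function.ne_iff.1 h
      exact Or.inl <| Finset.sum_pos' (fun j _ => mul_self_nonneg _)
        ⟨i, Finset.mem_univ i, mul_self_pos.2 hi⟩
    · obtain ⟨i, hi⟩ := Function.ne_iff.1 h
      exact Or.inr <| Finset.sum_pos' (fun j _ => mul_self_nonneg _)
        ⟨i, Finset.mem_univ i, mul_self_pos.2 hi⟩
  rcases hpos with hxp | hyp
  · have key : 0 < r * (p * x + 2 * q * t + r * y) := by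
      have h1 := quad_aux q r x y t hx hy hcs
      nlinarith [mul_pos (sub_pos.2 hpq) hxp]
    nlinarith [key]
  · have key : 0 < p * (p * x + 2 * q * t + r * y) := by
      have h1 := quad_aux q p y x t hy hx (by linarith [hcs, mul_comm x y])
      nlinarith [mul_pos (sub_pos.2 hpq) hyp]
    nlinarith [key]

/-- **Shifted negativity of `J`:** with `λ` defined by `d(1+λ) = a`, the quadratic form
generated by `M := N + λ d Q` is negative semi-definite; it is negative definite
if moreover `a > 0`. -/
theorem J_shifted_negative
    (s : ℝ × ℝ → ℝ) (hs : ContDiffOn ℝ 2 s dom)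
    (hse : ∀ x ∈ dom, 0 < sE s x) (hconv : Convexity s)
    (z : ℝ × ℝ) (hz : z ∈ dom)
    (a dcoef lam : ℝ) (ha : 0 ≤ a) (hd : 0 < dcoef) (hlam : dcoef * (1 + lam) = a)
    (n11 n12 n22 q11 q12 q22 m11 m12 m22 : ℝ)
    (e11 : n11 = (dcoef - a) * z.1 * sRho s z * (sE s z)⁻¹ * sRhoE s z
      + a * z.1⁻¹ * dRho2sRho s z)
    (e12 : 2 * n12 = (dcoef - a) * z.1 * sRho s z * (sE s z)⁻¹ * sEE s z
      + (dcoef + a) * z.1 * sRhoE s z)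
    (e22 : n22 = dcoef * z.1 * sEE s z)
    (g11 : q11 = z.1 * sRho s z * (sE s z)⁻¹ * sRhoE s z)
    (g12 : q12 = (1 / 2) * (z.1 * sRho s z * (sE s z)⁻¹ * sEE s z + z.1 * sRhoE s z))
    (g22 : q22 = z.1 * sEE s z)
    (k11 : m11 = n11 + lam * dcoef * q11)
    (k12 : m12 = n12 + lam * dcoef * q12)
    (k22 : m22 = n22 + lam * dcoef * q22)
    (d : ℕ) (hdim : 0 < d) :
    (∀ X Y : Fin d → ℝ,
        m11 * (∑ i, X i * X i) + 2 * m12 * (∑ i, X i * Y i) + m22 * (∑ i, Y i * Y i) ≤ 0) ∧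
    (0 < a → ∀ X Y : Fin d → ℝ, (X ≠ 0 ∨ Y ≠ 0) →
        m11 * (∑ i, X i * X i) + 2 * m12 * (∑ i, X i * Y i) + m22 * (∑ i, Y i * Y i) < 0) := by
  obtain ⟨hA, hC, hdet⟩ := hconv z hz
  have hz1 : (0:ℝ) < z.1 := hz.1
  have hse' : (0:ℝ) < sE s z := hse z hz
  have hld : lam * dcoef = a - dcoef := by linear_combination hlam
  have hm11 : m11 = a * z.1⁻¹ * dRho2sRho s z := by
    linear_combination k11 + e11 + (lam * dcoef) * g11 +
      (z.1 * sRho s z * (sE s z)⁻¹ * sRhoE s z) * hld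
  have hm12 : m12 = a * z.1 * sRhoE s z := by
    linear_combination k12 + (1/2) * e12 + (lam * dcoef) * g12 +
      (1/2) * (z.1 * sRho s z * (sE s z)⁻¹ * sEE s z + z.1 * sRhoE s z) * hld
  have hm22 : m22 = a * z.1 * sEE s z := by
    linear_combination k22 + e22 + (lam * dcoef) * g22 + (z.1 * sEE s z) * hld
  have hzinv : (0:ℝ) < z.1⁻¹ := inv_pos.2 hz1
  have hkey : m11 * m22 - m12 ^ 2 = a ^ 2 * detSigma s z := by
    rw [hm11, hm12, hm22, detSigma]
    field_simp
  constructor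
  · have h1 : m11 ≤ 0 := by
      rw [hm11]
      exact mul_nonpos_of_nonneg_of_nonpos (mul_nonneg ha hzinv.le) hA.le
    have h2 : m22 ≤ 0 := by
      rw [hm22]
      exact mul_nonpos_of_nonneg_of_nonpos (mul_nonneg ha hz1.le) hC.le
    have h3 : m12 ^ 2 ≤ m11 * m22 := by nlinarith [sq_nonneg a]
    exact fun X Y => quad_semidef d m11 m12 m22 h1 h2 h3 X Y
  · intro hap X Y hXY
    have h1 : m11 < 0 := by
      rw [hm11]
      exact mul_neg_of_pos_of_neg (mul_pos hap hzinv) hA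
    have h2 : m22 < 0 := by
      rw [hm22]
      exact mul_neg_of_pos_of_neg (mul_pos hap hz1) hC
    have h3 : m12 ^ 2 < m11 * m22 := by nlinarith [mul_pos (mul_pos hap hap) hdet]
    exact quad_def d m11 m12 m22 h1 h2 h3 X Y hXY
end
end

section
/- Necessity of a = d (algebraic core of the Entropy Inequalities theorem): Fix (ρ,e) ∈ (0,∞)² with p_e(ρ,e) ≠ 0, and real numbers a ≥ 0, d > 0; set x := 1 − a/d. Define the symmetric 2×2 matrix 𝕊₂ with entries s₁₁ = h₁₁ + x ρ^{−2} s_e p_ρ, s₁₂ = h₁₂ + (1/2) x ρ^{−2} s_e p_e, s₂₂ = h₂₂, where h₁₁ = s_ρ² c_p^{−1} + ρ^{−2} ∂_ρ(ρ² s_ρ), h₁₂ = s_ρ s_e c_p^{−1} + s_{ρe}, h₂₂ = s_e² c_p^{−1} + s_{ee}. Then det(𝕊₂) = −(1/4) x² ρ^{−4} s_e² p_e², and consequently 𝕊₂ is negative semi-definite if and only if x = 0, i.e., if and only if a = d. -/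
set_option maxHeartbeats 1000000
noncomputable section

open Real

lemma key_derivs (s : ℝ × ℝ → ℝ) (hs : ContDiffOn ℝ 2 s dom) (z : ℝ × ℝ) (hz : z ∈ dom)
    (hb : sE s z ≠ 0) :
    pRho s z = (-(dRho2sRho s z) * sE s z + z.1 ^ 2 * sRho s z * sRhoE s z) / sE s z ^ 2 ∧
    pE s z = (-(z.1 ^ 2 * sRhoE s z) * sE s z + z.1 ^ 2 * sRho s z * sEE s z) / sE s z ^ 2 ∧
    tRho s z = -(sRhoE s z) / sE s z ^ 2 ∧
    tE s z = -(sEE s z) / sE s z ^ 2 := by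
  have hdom : IsOpen dom := by
    have : dom = (Set.Ioi (0:ℝ)) ×ˢ (Set.Ioi (0:ℝ)) := by
      ext x; simp [dom, Set.mem_prod, Set.mem_Ioi]
    rw [this]; exact isOpen_Ioi.prod isOpen_Ioi
  have hsz : ContDiffAt ℝ 2 s z := hs.contDiffAt (hdom.mem_nhds hz)
  have hFd : DifferentiableAt ℝ (fderiv ℝ s) z :=
    (hsz.fderiv_right (m := 1) (by norm_num)).differentiableAt one_ne_zero
  set F2 := fderiv ℝ (fderiv ℝ s) z with hF2
  have hev : ∀ v : ℝ × ℝ, HasFDerivAt (fun x => fderiv ℝ s x v)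
      ((ContinuousLinearMap.apply ℝ ℝ v).comp F2) z := fun v =>
    (ContinuousLinearMap.apply ℝ ℝ v).hasFDerivAt.comp z hFd.hasFDerivAt
  have hsym := (hsz.isSymmSndFDerivAt (by norm_num)).eq
  have hsRho : HasFDerivAt (sRho s)
      ((ContinuousLinearMap.apply ℝ ℝ ((1:ℝ),(0:ℝ))).comp F2) z := hev _
  have hsE : HasFDerivAt (sE s)
      ((ContinuousLinearMap.apply ℝ ℝ ((0:ℝ),(1:ℝ))).comp F2) z := hev _
  -- second partials
  have hm : sRhoE s z = F2 (1,0) (0,1) := by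
    show fderiv ℝ (sE s) z (1,0) = _
    rw [hsE.fderiv]; rfl
  have hn : sEE s z = F2 (0,1) (0,1) := by
    show fderiv ℝ (sE s) z (0,1) = _
    rw [hsE.fderiv]; rfl
  -- dRho2sRho
  have hline : HasDerivAt (fun r : ℝ => ((r:ℝ), z.2)) ((1:ℝ), (0:ℝ)) z.1 :=
    (hasDerivAt_id z.1).prodMk (hasDerivAt_const _ _)
  have hcomp : HasDerivAt (fun r : ℝ => sRho s (r, z.2)) (F2 (1,0) (1,0)) z.1 := by
    have h := hsRho.comp_hasDerivAt z.1 hline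
    exact h
  have hA : dRho2sRho s z = 2 * z.1 * sRho s z + z.1 ^ 2 * F2 (1,0) (1,0) := by
    have hg := (hasDerivAt_pow 2 z.1).mul hcomp
    have := hg.deriv
    unfold dRho2sRho
    rw [show (fun r : ℝ => r ^ 2 * sRho s (r, z.2)) = ((fun x : ℝ => x ^ 2) * fun r => sRho s (r, z.2)) from rfl, this]; norm_num
  -- pressure derivatives
  have hpow : HasFDerivAt (fun x : ℝ × ℝ => x.1 ^ 2)
      ((((2:ℕ) * z.1 ^ 1 : ℝ)) • (ContinuousLinearMap.fst ℝ ℝ ℝ)) z :=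
    (hasDerivAt_pow 2 z.1).comp_hasFDerivAt z hasFDerivAt_fst
  have hnum := (hpow.neg).mul hsRho
  have hinv : HasFDerivAt (fun x => (sE s x)⁻¹)
      ((-(sE s z ^ 2)⁻¹) • ((ContinuousLinearMap.apply ℝ ℝ ((0:ℝ),(1:ℝ))).comp F2)) z :=
    (hasDerivAt_inv hb).comp_hasFDerivAt z hsE
  have hpress : press s = fun x => (-x.1 ^ 2 * sRho s x) * (sE s x)⁻¹ := by
    funext x; simp [press, div_eq_mul_inv]
  have hP := hnum.mul hinv
  rw [show ((-fun x : ℝ × ℝ => x.1 ^ 2) * sRho s * fun x => (sE s x)⁻¹) = press s from hpress.symm] at hP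
  simp only [Pi.mul_apply, Pi.neg_apply] at hP
  have hPf := hP.fderiv
  refine ⟨?_, ?_, ?_, ?_⟩
  · show fderiv ℝ (press s) z (1,0) = _
    rw [hPf]
    simp only [ContinuousLinearMap.add_apply, ContinuousLinearMap.smul_apply,
      ContinuousLinearMap.neg_apply, ContinuousLinearMap.comp_apply,
      ContinuousLinearMap.apply_apply, ContinuousLinearMap.coe_fst', smul_eq_mul]
    rw [hA, ← hm]
    field_simp
    ring
  · show fderiv ℝ (press s) z (0,1) = _
    rw [hPf]
    simp only [ContinuousLinearMap.add_apply, ContinuousLinearMap.smul_apply,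
      ContinuousLinearMap.neg_apply, ContinuousLinearMap.comp_apply,
      ContinuousLinearMap.apply_apply, ContinuousLinearMap.coe_fst', smul_eq_mul]
    have hsym' : ∀ v w : ℝ × ℝ, F2 v w = F2 w v := hsym
    rw [hsym' (0,1) (1,0), ← hm, ← hn]
    field_simp
    ring
  · show fderiv ℝ (temp s) z (1,0) = _
    rw [show temp s = fun x => (sE s x)⁻¹ from rfl, hinv.fderiv]
    simp only [ContinuousLinearMap.smul_apply, ContinuousLinearMap.comp_apply,
      ContinuousLinearMap.apply_apply, smul_eq_mul]
    rw [← hm]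
    field_simp
  · show fderiv ℝ (temp s) z (0,1) = _
    rw [show temp s = fun x => (sE s x)⁻¹ from rfl, hinv.fderiv]
    simp only [ContinuousLinearMap.smul_apply, ContinuousLinearMap.comp_apply,
      ContinuousLinearMap.apply_apply, smul_eq_mul]
    rw [← hn]
    field_simp

lemma aux_forward (s11 s12 s22 : ℝ)
    (H : ∀ X Y : ℝ, s11 * X ^ 2 + 2 * s12 * X * Y + s22 * Y ^ 2 ≤ 0)
    (hdet : s11 * s22 - s12 ^ 2 < 0) : False := by
  have hs11 : s11 ≤ 0 := by have := H 1 0; nlinarith [H 1 0]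
  rcases hs11.lt_or_eq with h | h
  · nlinarith [H s12 (-s11)]
  · have h12ne : s12 ≠ 0 := by
      intro h0; rw [h, h0] at hdet; norm_num at hdet
    have h2s : (2:ℝ) * s12 ≠ 0 := mul_ne_zero two_ne_zero h12ne
    have hY := H ((1 - s22) / (2 * s12)) 1
    rw [h] at hY
    have hmul : 2 * s12 * ((1 - s22) / (2 * s12)) = 1 - s22 := by field_simp
    nlinarith [hY, hmul]

lemma aux_nsd (h11 h12 h22 : ℝ) (H1 : h11 ≤ 0) (H2 : h22 ≤ 0)
    (HD : h11 * h22 - h12 ^ 2 = 0) (X Y : ℝ) :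
    h11 * X ^ 2 + 2 * h12 * X * Y + h22 * Y ^ 2 ≤ 0 := by
  rcases H1.lt_or_eq with h | h
  · have key : h11 * (h11 * X ^ 2 + 2 * h12 * X * Y + h22 * Y ^ 2)
        = (h11 * X + h12 * Y) ^ 2 := by
      linear_combination Y ^ 2 * HD
    by_contra hf
    push_neg at hf
    have h1 := mul_neg_of_neg_of_pos h hf
    rw [key] at h1
    exact (not_lt.mpr (sq_nonneg _)) h1
  · have hsq : h12 ^ 2 = 0 := by rw [h] at HD; linarith
    have h12z : h12 = 0 := (pow_eq_zero_iff (two_ne_zero)).mp hsq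
    rw [h, h12z]
    have h2 := mul_nonneg (neg_nonneg.2 H2) (sq_nonneg Y)
    nlinarith [h2]

/-- **Necessity of `a = d` (algebraic core of the entropy-inequalities theorem):**
`det 𝕊₂ = -(1/4) x² ρ⁻⁴ s_e² p_e²` with `x := 1 - a/d`, and consequently `𝕊₂` is
negative semi-definite if and only if `a = d`. -/
theorem necessity_a_eq_d
    (s : ℝ × ℝ → ℝ) (hs : ContDiffOn ℝ 2 s dom)
    (hse : ∀ x ∈ dom, 0 < sE s x) (hconv : Convexity s)
    (z : ℝ × ℝ) (hz : z ∈ dom) (hpe : pE s z ≠ 0)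
    (a dcoef x : ℝ) (ha : 0 ≤ a) (hd : 0 < dcoef) (hx : x = 1 - a / dcoef)
    (h11 h12 h22 s11 s12 s22 : ℝ)
    (e11 : h11 = (sRho s z) ^ 2 * (cP s z)⁻¹ + dRho2sRho s z / z.1 ^ 2)
    (e12 : h12 = sRho s z * sE s z * (cP s z)⁻¹ + sRhoE s z)
    (e22 : h22 = (sE s z) ^ 2 * (cP s z)⁻¹ + sEE s z)
    (f11 : s11 = h11 + x / z.1 ^ 2 * sE s z * pRho s z)
    (f12 : s12 = h12 + (1 / 2) * x / z.1 ^ 2 * sE s z * pE s z)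
    (f22 : s22 = h22) :
    s11 * s22 - s12 ^ 2 = -(1 / 4) * x ^ 2 / z.1 ^ 4 * (sE s z) ^ 2 * (pE s z) ^ 2 ∧
    ((∀ X Y : ℝ, s11 * X ^ 2 + 2 * s12 * X * Y + s22 * Y ^ 2 ≤ 0) ↔ a = dcoef) := by
  have hr0 : 0 < z.1 := hz.1
  have hr : z.1 ≠ 0 := ne_of_gt hr0
  have hb0 : 0 < sE s z := hse z hz
  have hb : sE s z ≠ 0 := ne_of_gt hb0
  obtain ⟨hA0, hn0, hD0⟩ := hconv z hz
  obtain ⟨P1, P2, P3, P4⟩ := key_derivs s hs z hz hb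
  set ρ := z.1 with hρdef
  set sa := sRho s z with hsa
  set sb := sE s z with hsb
  set sA := dRho2sRho s z with hsA
  set sm := sRhoE s z with hsm
  set sn := sEE s z with hsn
  have hDdef : detSigma s z = sA * sn - ρ ^ 2 * sm ^ 2 := rfl
  rw [hDdef] at hD0
  have hDne : sA * sn - ρ ^ 2 * sm ^ 2 ≠ 0 := ne_of_gt hD0
  have hQ : 0 < -sA * sb ^ 2 + 2 * ρ ^ 2 * sa * sm * sb - ρ ^ 2 * sa ^ 2 * sn := by
    have key : (-sA) * (-sA * sb ^ 2 + 2 * ρ ^ 2 * sa * sm * sb - ρ ^ 2 * sa ^ 2 * sn)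
        = (sA * sb - ρ ^ 2 * sa * sm) ^ 2 + ρ ^ 2 * sa ^ 2 * (sA * sn - ρ ^ 2 * sm ^ 2) := by
      ring
    have hpos : 0 < (-sA) * (-sA * sb ^ 2 + 2 * ρ ^ 2 * sa * sm * sb - ρ ^ 2 * sa ^ 2 * sn) := by
      rw [key]
      rcases eq_or_ne sa 0 with h | h
      · have heq : (sA * sb - ρ ^ 2 * sa * sm) ^ 2 + ρ ^ 2 * sa ^ 2 * (sA * sn - ρ ^ 2 * sm ^ 2)
            = (sA * sb) ^ 2 := by rw [h]; ring
        rw [heq]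
        exact (sq_nonneg _).lt_of_ne' (pow_ne_zero 2 (mul_ne_zero (ne_of_lt hA0) hb))
      · have h2 : 0 < sa ^ 2 := (sq_nonneg sa).lt_of_ne' (pow_ne_zero 2 h)
        exact add_pos_of_nonneg_of_pos (sq_nonneg _)
          (mul_pos (mul_pos (pow_pos hr0 2) h2) hD0)
    have hdiv := div_pos hpos (neg_pos.2 hA0)
    rwa [mul_div_cancel_left₀ _ (ne_of_gt (neg_pos.2 hA0))] at hdiv
  have hQne : -sA * sb ^ 2 + 2 * ρ ^ 2 * sa * sm * sb - ρ ^ 2 * sa ^ 2 * sn ≠ 0 := ne_of_gt hQ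
  have hden : pRho s z * tE s z - pE s z * tRho s z = (sA * sn - ρ ^ 2 * sm ^ 2) / sb ^ 3 := by
    rw [P1, P2, P3, P4]; field_simp; ring
  have hcP : cP s z =
      (-sA * sb ^ 2 + 2 * ρ ^ 2 * sa * sm * sb - ρ ^ 2 * sa ^ 2 * sn) /
        (sA * sn - ρ ^ 2 * sm ^ 2) := by
    rw [cP, hden, P1, P2, ← hsa, ← hsb, div_div_eq_mul_div]
    field_simp
    ring
  have hcv : (cP s z)⁻¹ * (-sA * sb ^ 2 + 2 * ρ ^ 2 * sa * sm * sb - ρ ^ 2 * sa ^ 2 * sn)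
      = sA * sn - ρ ^ 2 * sm ^ 2 := by
    rw [hcP, inv_div, div_mul_cancel₀ _ hQne]
  have e11' : ρ ^ 2 * h11 = ρ ^ 2 * sa ^ 2 * (cP s z)⁻¹ + sA := by
    rw [e11]; field_simp; try ring
  have P1' : sb ^ 2 * pRho s z = -sA * sb + ρ ^ 2 * sa * sm := by
    rw [P1]; field_simp; try ring
  have P2' : sb ^ 2 * pE s z = -(ρ ^ 2 * sm) * sb + ρ ^ 2 * sa * sn := by
    rw [P2]; field_simp; try ring
  have I1 : h11 * h22 - h12 ^ 2 = 0 := by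
    have J : ρ ^ 2 * (h11 * h22 - h12 ^ 2) = 0 := by
      rw [e12, e22]
      linear_combination (sb ^ 2 * (cP s z)⁻¹ + sn) * e11' - hcv
    exact (mul_eq_zero.mp J).resolve_left (pow_ne_zero 2 hr)
  have I2 : pRho s z * h22 - pE s z * h12 = 0 := by
    have J : sb ^ 2 * (pRho s z * h22 - pE s z * h12) = 0 := by
      rw [e12, e22]
      linear_combination (sb ^ 2 * (cP s z)⁻¹ + sn) * P1' - (sa * sb * (cP s z)⁻¹ + sm) * P2'
        + sb * hcv
    exact (mul_eq_zero.mp J).resolve_left (pow_ne_zero 2 hb)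
  have H11 : h11 ≤ 0 := by
    have key : h11 * (ρ ^ 2 * (-sA * sb ^ 2 + 2 * ρ ^ 2 * sa * sm * sb - ρ ^ 2 * sa ^ 2 * sn))
        = -(ρ ^ 2 * sa * sm - sA * sb) ^ 2 := by
      linear_combination (-sA * sb ^ 2 + 2 * ρ ^ 2 * sa * sm * sb - ρ ^ 2 * sa ^ 2 * sn) * e11'
        + ρ ^ 2 * sa ^ 2 * hcv
    have hpq : 0 < ρ ^ 2 * (-sA * sb ^ 2 + 2 * ρ ^ 2 * sa * sm * sb - ρ ^ 2 * sa ^ 2 * sn) :=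
      mul_pos (pow_pos hr0 2) hQ
    have hle : h11 * (ρ ^ 2 * (-sA * sb ^ 2 + 2 * ρ ^ 2 * sa * sm * sb - ρ ^ 2 * sa ^ 2 * sn))
        ≤ 0 := by rw [key]; exact neg_nonpos.2 (sq_nonneg _)
    by_contra hcon
    push_neg at hcon
    exact (not_lt.mpr hle) (mul_pos hcon hpq)
  have H22 : h22 ≤ 0 := by
    have key : h22 * (-sA * sb ^ 2 + 2 * ρ ^ 2 * sa * sm * sb - ρ ^ 2 * sa ^ 2 * sn)
        = -(ρ ^ 2) * (sm * sb - sa * sn) ^ 2 := by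
      rw [e22]
      linear_combination sb ^ 2 * hcv
    have hle : h22 * (-sA * sb ^ 2 + 2 * ρ ^ 2 * sa * sm * sb - ρ ^ 2 * sa ^ 2 * sn) ≤ 0 := by
      rw [key]
      have := mul_nonneg (pow_pos hr0 2).le (sq_nonneg (sm * sb - sa * sn))
      linarith [this]
    by_contra hcon
    push_neg at hcon
    exact (not_lt.mpr hle) (mul_pos hcon hQ)
  have detEq : s11 * s22 - s12 ^ 2 =
      -(1 / 4) * x ^ 2 / ρ ^ 4 * sb ^ 2 * (pE s z) ^ 2 := by
    rw [f11, f12, f22]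
    linear_combination I1 + (x * sb / ρ ^ 2) * I2
  refine ⟨detEq, ?_, ?_⟩
  · intro H
    have hx0 : x = 0 := by
      by_contra hx0
      have hx2 : 0 < x ^ 2 := (sq_nonneg x).lt_of_ne' (pow_ne_zero 2 hx0)
      have hp2 : 0 < pE s z ^ 2 := (sq_nonneg _).lt_of_ne' (pow_ne_zero 2 hpe)
      have hdetlt : s11 * s22 - s12 ^ 2 < 0 := by
        rw [detEq]
        have hpos : 0 < 1 / 4 * x ^ 2 / ρ ^ 4 * sb ^ 2 * pE s z ^ 2 :=
          mul_pos (mul_pos (div_pos (mul_pos (by norm_num) hx2) (pow_pos hr0 4))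
            (pow_pos hb0 2)) hp2
        have heq : -(1 / 4) * x ^ 2 / ρ ^ 4 * sb ^ 2 * pE s z ^ 2
            = -(1 / 4 * x ^ 2 / ρ ^ 4 * sb ^ 2 * pE s z ^ 2) := by ring
        rw [heq]
        exact neg_lt_zero.mpr hpos
      exact aux_forward s11 s12 s22 H hdetlt
    rw [hx0] at hx
    have h1 : a / dcoef = 1 := by linarith
    rw [div_eq_one_iff_eq (ne_of_gt hd)] at h1
    exact h1
  · intro hax
    have hx0 : x = 0 := by rw [hx, hax, div_self (ne_of_gt hd)]; ring
    rw [hx0] at f11 f12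
    norm_num at f11 f12
    intro X Y
    rw [f11, f12, f22]
    exact aux_nsd h11 h12 h22 H11 H22 I1 X Y
end
end

section
/- Brenner-type reformulation: Let ρ > 0, u, E be smooth fields on ℝ^d × [0,∞) with m := ρu, e := E/ρ − ½|u|², and let f, l be smooth vector fields and 𝔾 a smooth tensor field. Define the mass velocity u_m := u − ρ^{−1} f. Then (ρ, m, E) solves ∂_t ρ + div m − div f = 0, ∂_t m + div(u⊗m) + ∇p − div(𝔾 + f⊗u) = 0, ∂_t E + div(u(E+p)) − div(l + ½|u|² f + 𝔾·u) = 0 if and only if it solves ∂_t ρ + div(u_m ρ) = 0, ∂_t m + div(u_m ⊗ m) + ∇p − div 𝔾 = 0, ∂_t E + div(u_m E) − div(l − e f) + div((p I − 𝔾)·u) = 0. -/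
noncomputable section

private lemma Dx_add {n : ℕ} (i : Fin n) {f g : ℝ × (Fin n → ℝ) → ℝ}
    (hf : Differentiable ℝ f) (hg : Differentiable ℝ g) (q : ℝ × (Fin n → ℝ)) :
    Dx i (fun r => f r + g r) q = Dx i f q + Dx i g q := by
  unfold Dx
  rw [fderiv_fun_add (hf q) (hg q)]
  simp

private lemma Dx_sub {n : ℕ} (i : Fin n) {f g : ℝ × (Fin n → ℝ) → ℝ}
    (hf : Differentiable ℝ f) (hg : Differentiable ℝ g) (q : ℝ × (Fin n → ℝ)) :
    Dx i (fun r => f r - g r) q = Dx i f q - Dx i g q := by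
  unfold Dx
  rw [fderiv_fun_sub (hf q) (hg q)]
  simp

/-- **Brenner-type reformulation:** with the mass velocity `u_m := u - ρ⁻¹ f`, the fields
`(ρ, m, E)` solve the regularized system with fluxes `𝔾 + f⊗u` and `l + ½|u|² f + 𝔾·u`
if and only if they solve the two-velocity (Brenner-type) system
`∂_t ρ + div(u_m ρ) = 0`, `∂_t m + div(u_m ⊗ m) + ∇p - div 𝔾 = 0`,
`∂_t E + div(u_m E) - div(l - e f) + div((p I - 𝔾)·u) = 0`. -/
theorem brenner_reformulation
    (n : ℕ) (hn : 0 < n)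
    (ρ E pfield : ℝ × (Fin n → ℝ) → ℝ)
    (u fvec lvec : ℝ × (Fin n → ℝ) → Fin n → ℝ)
    (G : ℝ × (Fin n → ℝ) → Fin n → Fin n → ℝ)
    (hρ : ContDiff ℝ 2 ρ) (hu : ContDiff ℝ 2 u) (hE : ContDiff ℝ 2 E)
    (hp : ContDiff ℝ 2 pfield) (hfvec : ContDiff ℝ 2 fvec)
    (hlvec : ContDiff ℝ 2 lvec) (hG : ContDiff ℝ 2 G)
    (hρpos : ∀ q, 0 < ρ q)
    -- derived fields
    (m : ℝ × (Fin n → ℝ) → Fin n → ℝ) (hm : ∀ q j, m q j = ρ q * u q j)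
    (eI : ℝ × (Fin n → ℝ) → ℝ)
    (heI : ∀ q, eI q = E q / ρ q - (1 / 2) * ∑ i, (u q i) ^ 2)
    (um : ℝ × (Fin n → ℝ) → Fin n → ℝ)
    (hum : ∀ q i, um q i = u q i - (ρ q)⁻¹ * fvec q i) :
    -- the regularized system ...
    ((∀ q : ℝ × (Fin n → ℝ), 0 ≤ q.1 →
        Dt ρ q + (∑ i, Dx i (fun r => m r i) q)
          - (∑ i, Dx i (fun r => fvec r i) q) = 0) ∧
     (∀ q : ℝ × (Fin n → ℝ), 0 ≤ q.1 → ∀ j,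
        Dt (fun r => m r j) q + (∑ i, Dx i (fun r => u r i * m r j) q) + Dx j pfield q
          - (∑ i, Dx i (fun r => G r i j + fvec r i * u r j) q) = 0) ∧
     (∀ q : ℝ × (Fin n → ℝ), 0 ≤ q.1 →
        Dt E q + (∑ i, Dx i (fun r => u r i * (E r + pfield r)) q)
          - (∑ i, Dx i (fun r => lvec r i + (1 / 2) * (∑ k, (u r k) ^ 2) * fvec r i
              + ∑ j, G r i j * u r j) q) = 0))
    ↔
    -- ... is equivalent to the Brenner-type system
    ((∀ q : ℝ × (Fin n → ℝ), 0 ≤ q.1 →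
        Dt ρ q + (∑ i, Dx i (fun r => um r i * ρ r) q) = 0) ∧
     (∀ q : ℝ × (Fin n → ℝ), 0 ≤ q.1 → ∀ j,
        Dt (fun r => m r j) q + (∑ i, Dx i (fun r => um r i * m r j) q) + Dx j pfield q
          - (∑ i, Dx i (fun r => G r i j) q) = 0) ∧
     (∀ q : ℝ × (Fin n → ℝ), 0 ≤ q.1 →
        Dt E q + (∑ i, Dx i (fun r => um r i * E r) q)
          - (∑ i, Dx i (fun r => lvec r i - eI r * fvec r i) q)
          + (∑ i, Dx i (fun r => pfield r * u r i - ∑ j, G r i j * u r j) q) = 0)) := by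
  have one_le : (2 : WithTop ℕ∞) ≠ 0 := two_ne_zero
  have dρ : Differentiable ℝ ρ := hρ.differentiable one_le
  have dE : Differentiable ℝ E := hE.differentiable one_le
  have dp : Differentiable ℝ pfield := hp.differentiable one_le
  have hρne : ∀ r, ρ r ≠ 0 := fun r => (hρpos r).ne'
  have dinv : Differentiable ℝ (fun r => (ρ r)⁻¹) := dρ.inv hρne
  have ddiv : Differentiable ℝ (fun r => E r / ρ r) := by simp only [div_eq_mul_inv]; exact dE.mul dinv
  have du : ∀ i, Differentiable ℝ (fun r => u r i) :=
    differentiable_pi.mp (hu.differentiable one_le)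
  have df : ∀ i, Differentiable ℝ (fun r => fvec r i) :=
    differentiable_pi.mp (hfvec.differentiable one_le)
  have dl : ∀ i, Differentiable ℝ (fun r => lvec r i) :=
    differentiable_pi.mp (hlvec.differentiable one_le)
  have dG : ∀ i j, Differentiable ℝ (fun r => G r i j) := fun i j =>
    differentiable_pi.mp (differentiable_pi.mp (hG.differentiable one_le) i) j
  have dusq : Differentiable ℝ (fun r => ∑ k, u r k ^ 2) :=
    Differentiable.fun_sum (fun k _ => (du k).pow 2)
  have dGu : ∀ i, Differentiable ℝ (fun r => ∑ j, G r i j * u r j) := fun i =>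
    Differentiable.fun_sum (fun j _ => (dG i j).mul (du j))
  simp only [hm, hum, heI]
  -- sum identities
  have S1 : ∀ q : ℝ × (Fin n → ℝ),
      ∑ i, Dx i (fun r => (u r i - (ρ r)⁻¹ * fvec r i) * ρ r) q
        = ∑ i, Dx i (fun r => ρ r * u r i) q - ∑ i, Dx i (fun r => fvec r i) q := by
    intro q
    rw [← Finset.sum_sub_distrib]
    refine Finset.sum_congr rfl fun i _ => ?_
    rw [← Dx_sub i (dρ.fun_mul (du i)) (df i)]
    congr 1
    funext r
    field_simp [hρne r]
  have S2a : ∀ (q : ℝ × (Fin n → ℝ)) (j : Fin n),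
      ∑ i, Dx i (fun r => (u r i - (ρ r)⁻¹ * fvec r i) * (ρ r * u r j)) q
        = ∑ i, Dx i (fun r => u r i * (ρ r * u r j)) q
          - ∑ i, Dx i (fun r => fvec r i * u r j) q := by
    intro q j
    rw [← Finset.sum_sub_distrib]
    refine Finset.sum_congr rfl fun i _ => ?_
    rw [← Dx_sub i ((du i).fun_mul (dρ.fun_mul (du j))) ((df i).fun_mul (du j))]
    congr 1
    funext r
    field_simp [hρne r]
  have S2b : ∀ (q : ℝ × (Fin n → ℝ)) (j : Fin n),
      ∑ i, Dx i (fun r => G r i j + fvec r i * u r j) q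
        = ∑ i, Dx i (fun r => G r i j) q + ∑ i, Dx i (fun r => fvec r i * u r j) q := by
    intro q j
    rw [← Finset.sum_add_distrib]
    exact Finset.sum_congr rfl fun i _ => Dx_add i (dG i j) ((df i).mul (du j)) q
  -- energy identity
  have S3 : ∀ q : ℝ × (Fin n → ℝ),
      ∑ i, Dx i (fun r => (u r i - (ρ r)⁻¹ * fvec r i) * E r) q
        - ∑ i, Dx i (fun r =>
            lvec r i - (E r / ρ r - 1 / 2 * ∑ k, u r k ^ 2) * fvec r i) q
        + ∑ i, Dx i (fun r => pfield r * u r i - ∑ j, G r i j * u r j) q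
      = ∑ i, Dx i (fun r => u r i * (E r + pfield r)) q
        - ∑ i, Dx i (fun r =>
            lvec r i + 1 / 2 * (∑ k, u r k ^ 2) * fvec r i + ∑ j, G r i j * u r j) q := by
    intro q
    rw [← Finset.sum_sub_distrib, ← Finset.sum_add_distrib, ← Finset.sum_sub_distrib]
    refine Finset.sum_congr rfl fun i _ => ?_
    have dA : Differentiable ℝ (fun r => (u r i - (ρ r)⁻¹ * fvec r i) * E r) :=
      ((du i).sub (dinv.mul (df i))).mul dE
    have dB : Differentiable ℝ
        (fun r => lvec r i - (E r / ρ r - 1 / 2 * ∑ k, u r k ^ 2) * fvec r i) :=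
      (dl i).sub ((ddiv.sub (dusq.const_mul _)).mul (df i))
    have dC : Differentiable ℝ (fun r => pfield r * u r i - ∑ j, G r i j * u r j) :=
      (dp.mul (du i)).sub (dGu i)
    have dA' : Differentiable ℝ (fun r => u r i * (E r + pfield r)) :=
      (du i).mul (dE.add dp)
    have dB' : Differentiable ℝ
        (fun r => lvec r i + 1 / 2 * (∑ k, u r k ^ 2) * fvec r i + ∑ j, G r i j * u r j) :=
      ((dl i).add ((dusq.const_mul _).mul (df i))).add (dGu i)
    rw [← Dx_sub i dA dB, ← Dx_add i (dA.fun_sub dB) dC, ← Dx_sub i dA' dB']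
    congr 1
    funext r
    field_simp [hρne r]
    ring
  constructor
  · rintro ⟨h1, h2, h3⟩
    refine ⟨fun q hq => ?_, fun q hq j => ?_, fun q hq => ?_⟩
    · linarith [h1 q hq, S1 q]
    · linarith [h2 q hq j, S2a q j, S2b q j]
    · linarith [h3 q hq, S3 q]
  · rintro ⟨h1, h2, h3⟩
    refine ⟨fun q hq => ?_, fun q hq j => ?_, fun q hq => ?_⟩
    · linarith [h1 q hq, S1 q]
    · linarith [h2 q hq j, S2a q j, S2b q j]
    · linarith [h3 q hq, S3 q]
end
end

section
/- Hyperbolicity from convexity: Let s(ρ,e) be a C² entropy with s_e > 0 satisfying the convexity conditions ∂_ρ(ρ² s_ρ) < 0, s_{ee} < 0, and ∂_ρ(ρ² s_ρ)·s_{ee} − ρ² s_{ρe}² > 0. Then the squared sound speed c² := p_ρ − (s_ρ/s_e) p_e = ρ² s_e^{−3}( 2 s_e s_ρ s_{ρe} − s_e² ρ^{−2} ∂_ρ(ρ² s_ρ) − s_ρ² s_{ee} ) is strictly positive at every (ρ,e) ∈ (0,∞)². No sign assumption on the pressure p := −ρ² s_ρ/s_e is needed. -/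
noncomputable section

open Real

set_option maxHeartbeats 1000000 in
private lemma quad_pos (r b a E B K : ℝ) (hr : 0 < r) (hb : 0 < b) (hK : K < 0)
    (hB : B < 0) (hdet : 0 < K * B - r ^ 2 * E ^ 2) :
    0 < 2 * r ^ 2 * b * a * E - b ^ 2 * K - r ^ 2 * a ^ 2 * B := by
  nlinarith [mul_pos hdet (mul_pos hb hb),
    mul_nonneg (sq_nonneg r) (sq_nonneg (E * b - a * B)), mul_pos hr hr]

set_option maxHeartbeats 1000000 in
/-- **Hyperbolicity from convexity:** under the convexity conditions and `s_e > 0`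
(no sign assumption on the pressure), the squared sound speed
`c² = p_ρ - (s_ρ/s_e) p_e = ρ² s_e⁻³(2 s_e s_ρ s_{ρe} - s_e² ρ⁻² ∂_ρ(ρ² s_ρ) - s_ρ² s_{ee})`
is strictly positive. -/
theorem hyperbolicity
    (s : ℝ × ℝ → ℝ) (hs : ContDiffOn ℝ 2 s dom)
    (hse : ∀ x ∈ dom, 0 < sE s x) (hconv : Convexity s) :
    ∀ x ∈ dom,
      cSq s x = x.1 ^ 2 / (sE s x) ^ 3 *
        (2 * sE s x * sRho s x * sRhoE s x - (sE s x) ^ 2 / x.1 ^ 2 * dRho2sRho s x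
          - (sRho s x) ^ 2 * sEE s x) ∧
      0 < cSq s x := by
  intro x hx
  obtain ⟨hρ, he⟩ := hx
  have hρ0 : x.1 ≠ 0 := ne_of_gt hρ
  have hopen : IsOpen dom := by
    have : dom = {y : ℝ × ℝ | 0 < y.1} ∩ {y : ℝ × ℝ | 0 < y.2} := rfl
    rw [this]
    exact (isOpen_lt continuous_const continuous_fst).inter
      (isOpen_lt continuous_const continuous_snd)
  have hnx : dom ∈ nhds x := hopen.mem_nhds ⟨hρ, he⟩
  have hsx : ContDiffAt ℝ 2 s x := hs.contDiffAt hnx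
  -- second derivative data
  have hf' : ContDiffAt ℝ 1 (fderiv ℝ s) x := hsx.fderiv_right le_rfl
  have hd2 : DifferentiableAt ℝ (fderiv ℝ s) x := hf'.differentiableAt one_ne_zero
  set F2 := fderiv ℝ (fderiv ℝ s) x with hF2
  have key : ∀ v : ℝ × ℝ, HasFDerivAt (fun y => fderiv ℝ s y v) (F2.flip v) x := by
    intro v
    have h := hd2.hasFDerivAt.clm_apply (hasFDerivAt_const v x)
    simpa using h
  have hsymm : fderiv ℝ (fderiv ℝ s) x (1, 0) (0, 1)
      = fderiv ℝ (fderiv ℝ s) x (0, 1) (1, 0) :=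
    (hsx.isSymmSndFDerivAt (by norm_num)) _ _
  set a := sRho s x with ha
  set b := sE s x with hb
  have hbpos : 0 < b := hse x ⟨hρ, he⟩
  have hb0 : b ≠ 0 := ne_of_gt hbpos
  set A11 := F2 ((1:ℝ), (0:ℝ)) ((1:ℝ), (0:ℝ)) with hA11d
  set A12 := F2 ((1:ℝ), (0:ℝ)) ((0:ℝ), (1:ℝ)) with hA12d
  set A22 := F2 ((0:ℝ), (1:ℝ)) ((0:ℝ), (1:ℝ)) with hA22d
  -- values of the second partials appearing in the statement
  have hA12 : sRhoE s x = A12 := by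
    show fderiv ℝ (fun y => fderiv ℝ s y ((0:ℝ),(1:ℝ))) x ((1:ℝ),(0:ℝ)) = A12
    rw [(key ((0:ℝ),(1:ℝ))).fderiv]
    simp [ContinuousLinearMap.flip_apply, hA12d]
  have hA22 : sEE s x = A22 := by
    show fderiv ℝ (fun y => fderiv ℝ s y ((0:ℝ),(1:ℝ))) x ((0:ℝ),(1:ℝ)) = A22
    rw [(key ((0:ℝ),(1:ℝ))).fderiv]
    simp [ContinuousLinearMap.flip_apply, hA22d]
  -- coordinate lines
  have hline1 : HasDerivAt (fun r : ℝ => (r, x.2)) ((1:ℝ), (0:ℝ)) x.1 :=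
    HasDerivAt.prodMk (hasDerivAt_id x.1) (hasDerivAt_const x.1 x.2)
  have hline2 : HasDerivAt (fun t : ℝ => (x.1, t)) ((0:ℝ), (1:ℝ)) x.2 :=
    HasDerivAt.prodMk (hasDerivAt_const x.2 x.1) (hasDerivAt_id x.2)
  -- partial derivatives of sRho and sE along coordinate lines
  have hsRho_r : HasDerivAt (fun r => sRho s (r, x.2)) A11 x.1 := by
    have h := (key ((1:ℝ),(0:ℝ))).comp_hasDerivAt x.1 hline1
    exact h
  have hsE_r : HasDerivAt (fun r => sE s (r, x.2)) A12 x.1 := by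
    have h := (key ((0:ℝ),(1:ℝ))).comp_hasDerivAt x.1 hline1
    exact h
  have hsRho_e : HasDerivAt (fun t => sRho s (x.1, t)) A12 x.2 := by
    have h := (key ((1:ℝ),(0:ℝ))).comp_hasDerivAt x.2 hline2
    rw [hsymm]; exact h
  have hsE_e : HasDerivAt (fun t => sE s (x.1, t)) A22 x.2 := by
    have h := (key ((0:ℝ),(1:ℝ))).comp_hasDerivAt x.2 hline2
    exact h
  -- value of dRho2sRho
  have hKval : dRho2sRho s x = 2 * x.1 * a + x.1 ^ 2 * A11 := by
    have h := ((hasDerivAt_pow 2 x.1).mul hsRho_r).deriv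
    simpa [dRho2sRho, ha, Pi.mul_def] using h
  -- differentiability of the pressure
  have hdsRho : DifferentiableAt ℝ (sRho s) x := (key ((1:ℝ),(0:ℝ))).differentiableAt
  have hdsE : DifferentiableAt ℝ (sE s) x := (key ((0:ℝ),(1:ℝ))).differentiableAt
  have hpdiff : DifferentiableAt ℝ (press s) x := by
    have h1 : DifferentiableAt ℝ (fun y : ℝ × ℝ => -y.1 ^ 2 * sRho s y) x :=
      ((differentiableAt_fst.pow 2).neg).mul hdsRho
    have h2 : DifferentiableAt ℝ (fun y : ℝ × ℝ => -y.1 ^ 2 * sRho s y * (sE s y)⁻¹) x :=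
      h1.mul (hdsE.inv hb0)
    show DifferentiableAt ℝ (fun y : ℝ × ℝ => -y.1 ^ 2 * sRho s y / sE s y) x
    simp only [div_eq_mul_inv]
    exact h2
  -- pRho
  have hcomp1 : HasDerivAt (fun r => press s (r, x.2)) (pRho s x) x.1 :=
    (hpdiff.hasFDerivAt.comp_hasDerivAt x.1 hline1 :)
  have hP1 : HasDerivAt (fun r => press s (r, x.2))
      (((-(2 * x.1 ^ 1) * a + -x.1 ^ 2 * A11) * b - -x.1 ^ 2 * a * A12) / b ^ 2) x.1 := by
    have h := (((hasDerivAt_pow 2 x.1).neg).mul hsRho_r).div hsE_r hb0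
    exact h
  have hpρ : pRho s x
      = ((-(2 * x.1 ^ 1) * a + -x.1 ^ 2 * A11) * b - -x.1 ^ 2 * a * A12) / b ^ 2 :=
    hcomp1.unique hP1
  -- pE
  have hcomp2 : HasDerivAt (fun t => press s (x.1, t)) (pE s x) x.2 :=
    (hpdiff.hasFDerivAt.comp_hasDerivAt x.2 hline2 :)
  have hP2 : HasDerivAt (fun t => press s (x.1, t))
      (((0 * a + -x.1 ^ 2 * A12) * b - -x.1 ^ 2 * a * A22) / b ^ 2) x.2 := by
    have h := (((hasDerivAt_const x.2 (-x.1 ^ 2))).mul hsRho_e).div hsE_e hb0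
    exact h
  have hpe : pE s x = ((0 * a + -x.1 ^ 2 * A12) * b - -x.1 ^ 2 * a * A22) / b ^ 2 :=
    hcomp2.unique hP2
  -- the equality
  have heq : cSq s x = x.1 ^ 2 / b ^ 3 *
      (2 * b * a * sRhoE s x - b ^ 2 / x.1 ^ 2 * dRho2sRho s x - a ^ 2 * sEE s x) := by
    rw [cSq, hpρ, hpe, hA12, hA22, hKval, ← ha, ← hb]
    field_simp
    ring
  refine ⟨heq, ?_⟩
  obtain ⟨hKneg, hEEneg, hdet⟩ := hconv x ⟨hρ, he⟩
  rw [heq]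
  rw [hA12, hA22]
  rw [hA22] at hEEneg
  simp only [detSigma, hA12, hA22] at hdet
  set K := dRho2sRho s x with hKd
  have hQ : 0 < 2 * x.1 ^ 2 * b * a * A12 - b ^ 2 * K - x.1 ^ 2 * a ^ 2 * A22 :=
    quad_pos x.1 b a A12 A22 K hρ hbpos hKneg hEEneg hdet
  have hrw : x.1 ^ 2 / b ^ 3 * (2 * b * a * A12 - b ^ 2 / x.1 ^ 2 * K - a ^ 2 * A22)
      = (2 * x.1 ^ 2 * b * a * A12 - b ^ 2 * K - x.1 ^ 2 * a ^ 2 * A22) / b ^ 3 := by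
    field_simp
  rw [hrw]
  exact div_pos hQ (pow_pos hbpos 3)
end
end
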